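/- arXiv:2012.15141 — 2 statements merged into one kernel-verified Lean document; each statement's English description precedes it below -/
import Mathlib

section
/- Let (E, D) be a semistable pseudo-root (canonical polarization of degree g-1) on a connected weighted graph Γ, and let V be a proper subset of V(Γ) with β_D(V) = 0 (here E = ∅ for simplicity). Let Γ₁ = Γ(V), Γ₂ = Γ(V^c) be the induced subgraphs, D₁ = D|_{Γ₁}, and D₂ = D|_{Γ₂} - Σ_{v∈V^c} deg_{E(V,V^c)}(v)·v. Then (Γᵢ, ∅, Dᵢ) is a semistable root-graph on Γᵢ with respect to the canonical polarization μᵢ(v) = μ(v) - deg_{E(V,V^c)}(v)/2 of Γᵢ, for i = 1, 2. That is: 2Dᵢ + Div(φ|_{Γᵢ}) = K_{Γᵢ}, φ|_{Γᵢ} is acyclic, and Dᵢ is μᵢ-semistable. -/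
/-! A common framework for weighted multigraphs, divisors, flows,
subdivisions, pseudo-divisors and specializations, following
"The moduli space of quasistable spin curves". -/

noncomputable section

/-- A finite weighted multigraph (with a reference orientation of each edge). -/
structure WGraph where
  V : Type
  E : Type
  [fintV : Fintype V]
  [decV : DecidableEq V]
  [fintE : Fintype E]
  [decE : DecidableEq E]
  src : E → V
  tgt : E → V
  w : V → ℕ

namespace WGraph

attribute [instance] WGraph.fintV WGraph.decV WGraph.fintE WGraph.decE

attribute [local instance] Classical.propDecidable

variable (G : WGraph)

/-- Degree of a vertex (loops count twice). -/
def deg (v : G.V) : ℕ :=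
  (Finset.univ.filter (fun e => G.src e = v)).card +
    (Finset.univ.filter (fun e => G.tgt e = v)).card

/-- Degree of a vertex in the edge set `A` (loops count twice). -/
def degIn (A : Finset G.E) (v : G.V) : ℕ :=
  (A.filter (fun e => G.src e = v)).card + (A.filter (fun e => G.tgt e = v)).card

/-- Canonical divisor: `K(v) = 2 w(v) - 2 + deg(v)`. -/
def K (v : G.V) : ℤ := 2 * (G.w v : ℤ) - 2 + (G.deg v : ℤ)

/-- Canonical polarization of degree `g - 1`. -/
def canPol (v : G.V) : ℚ := (G.K v : ℚ) / 2

/-- Oriented edges: `(e, true)` is `src → tgt`, `(e, false)` is the reverse. -/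
abbrev OEdge := G.E × Bool

def osrc (oe : G.OEdge) : G.V := if oe.2 then G.src oe.1 else G.tgt oe.1

def otgt (oe : G.OEdge) : G.V := if oe.2 then G.tgt oe.1 else G.src oe.1

/-- A flow is recorded by its values along the reference orientation;
`flowVal` gives its value on an oriented edge. -/
def flowVal (φ : G.E → ℤ) (oe : G.OEdge) : ℤ := if oe.2 then φ oe.1 else -φ oe.1

/-- The divisor of a flow: `Div(φ)(v) = ∑_{t(e) = v} φ(e)` over oriented edges. -/
def divOf (φ : G.E → ℤ) (v : G.V) : ℤ :=
  (∑ e : G.E, if G.tgt e = v then φ e else 0) -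
    ∑ e : G.E, if G.src e = v then φ e else 0

/-- `e` has exactly one endpoint in `W`. -/
def crossing (W : Finset G.V) (e : G.E) : Prop := (G.src e ∈ W) ≠ (G.tgt e ∈ W)

/-- Number of edges between `W` and its complement. -/
def delta (W : Finset G.V) : ℕ := (Finset.univ.filter (fun e => G.crossing W e)).card

/-- `β_D(W) = deg(D|_W) - μ(W) + δ_W / 2`. -/
def beta (μ : G.V → ℚ) (D : G.V → ℤ) (W : Finset G.V) : ℚ :=
  (∑ v ∈ W, (D v : ℚ)) - (∑ v ∈ W, μ v) + (G.delta W : ℚ) / 2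

def Semistable (μ : G.V → ℚ) (D : G.V → ℤ) : Prop :=
  ∀ W : Finset G.V, W ≠ Finset.univ → 0 ≤ G.beta μ D W

def Stable (μ : G.V → ℚ) (D : G.V → ℤ) : Prop :=
  ∀ W : Finset G.V, W ≠ Finset.univ → W.Nonempty → 0 < G.beta μ D W

def Quasistable (μ : G.V → ℚ) (v₀ : G.V) (D : G.V → ℤ) : Prop :=
  ∀ W : Finset G.V, W ≠ Finset.univ →
    (0 ≤ G.beta μ D W ∧ (v₀ ∈ W → 0 < G.beta μ D W))

/-- An oriented cycle: a nonempty cyclically closed chain of oriented edges,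
with pairwise distinct underlying edges and pairwise distinct vertices. -/
def IsOrientedCycle (c : List G.OEdge) : Prop :=
  c ≠ [] ∧ (c.map Prod.fst).Nodup ∧ (c.map G.osrc).Nodup ∧
    ∀ i : Fin c.length,
      G.otgt (c.get i) = G.osrc (c.get ⟨((i : ℕ) + 1) % c.length, Nat.mod_lt _ i.pos⟩)

/-- A flow is acyclic if there is no oriented cycle on which it is
nonnegative and somewhere positive. -/
def Acyclic (φ : G.E → ℤ) : Prop :=
  ¬∃ c : List G.OEdge, G.IsOrientedCycle c ∧ (∀ oe ∈ c, 0 ≤ G.flowVal φ oe) ∧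
      ∃ oe ∈ c, 0 < G.flowVal φ oe

/-- Adjacency through an edge of `A`. -/
def adjVia (A : Finset G.E) (a b : G.V) : Prop :=
  ∃ e ∈ A, (G.src e = a ∧ G.tgt e = b) ∨ (G.src e = b ∧ G.tgt e = a)

/-- Reachability using only edges of `A`. -/
def ReachVia (A : Finset G.E) : G.V → G.V → Prop := Relation.ReflTransGen (G.adjVia A)

def Connected : Prop := Nonempty G.V ∧ ∀ u v : G.V, G.ReachVia Finset.univ u v

/-- A cyclic subgraph: a set of edges in which every vertex has even degree. -/
def IsCyclicSubgraph (P : Finset G.E) : Prop := ∀ v : G.V, Even (G.degIn P v)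

/-- The characteristic flow of a vertex. -/
def charFlow (v₀ : G.V) (e : G.E) : ℤ :=
  if G.src e = v₀ ∧ G.tgt e ≠ v₀ then 1
  else if G.tgt e = v₀ ∧ G.src e ≠ v₀ then -1 else 0

/-- `Div(v₀)`, the principal divisor attached to a vertex. -/
def DivV (v₀ : G.V) : G.V → ℤ := G.divOf (G.charFlow v₀)

/-- Principal divisors are integer combinations of the `Div(v)`. -/
def Principal (D : G.V → ℤ) : Prop :=
  ∃ a : G.V → ℤ, ∀ v, D v = ∑ u : G.V, a u * G.DivV u v

/-- Number of connected components of the subgraph with all vertices and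
edge set `A`. -/
def numComponents (A : Finset G.E) : ℕ :=
  (Finset.univ.image (fun v => Finset.univ.filter (fun u => G.ReachVia A v u))).card

/-- The subdivision `Γ^S`: one exceptional vertex inserted in each edge of `S`. -/
def subdiv (S : Finset G.E) : WGraph where
  V := G.V ⊕ {e // e ∈ S}
  E := {e // e ∉ S} ⊕ {e // e ∈ S} × Bool
  src := fun x =>
    match x with
    | .inl e => .inl (G.src e.1)
    | .inr (e, b) => if b then .inr e else .inl (G.src e.1)
  tgt := fun x =>
    match x with
    | .inl e => .inl (G.tgt e.1)
    | .inr (e, b) => if b then .inl (G.tgt e.1) else .inr e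
  w := fun v =>
    match v with
    | .inl v => G.w v
    | .inr _ => 0

/-- A pseudo-divisor: value `-1` on every exceptional vertex. -/
def IsPseudoDivisor (S : Finset G.E) (D : (G.subdiv S).V → ℤ) : Prop :=
  ∀ x : {e // e ∈ S}, D (Sum.inr x) = -1

/-- A pseudo-root: `2 D + Div(φ) = K_{Γ^S}` for some acyclic flow `φ` on `Γ^S`. -/
def IsPseudoRoot (S : Finset G.E) (D : (G.subdiv S).V → ℤ) : Prop :=
  G.IsPseudoDivisor S D ∧
    ∃ φ : (G.subdiv S).E → ℤ, (G.subdiv S).Acyclic φ ∧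
      ∀ v, 2 * D v + (G.subdiv S).divOf φ v = (G.subdiv S).K v

/-- Semistability of a pseudo-divisor: semistability on the subdivision with
respect to the (extended) canonical polarization. -/
def IsSemistablePR (S : Finset G.E) (D : (G.subdiv S).V → ℤ) : Prop :=
  (G.subdiv S).Semistable (G.subdiv S).canPol D

/-- `β_{E,D}` for pseudo-divisors, on subsets of the original vertices. -/
def betaPoly (S : Finset G.E) (D : (G.subdiv S).V → ℤ) (W : Finset G.V) : ℚ :=
  (∑ v ∈ W, (D (Sum.inl v) : ℚ)) -
    (∑ v ∈ W, (G.canPol v + (G.degIn S v : ℚ) / 2)) +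
    ((Finset.univ.filter (fun e => e ∉ S ∧ G.crossing W e)).card : ℚ) / 2

/-- Polystability of a pseudo-divisor. -/
def IsPolystable (S : Finset G.E) (D : (G.subdiv S).V → ℤ) : Prop :=
  ∀ W : Finset G.V,
    0 ≤ G.betaPoly S D W ∧ ((∃ e, e ∉ S ∧ G.crossing W e) → 0 < G.betaPoly S D W)

/-- The divisor `D_P` attached to a cyclic subgraph `P`, on `Γ^{E_P}` with
`E_P = Pᶜ`. -/
def DP (P : Finset G.E) : (G.subdiv Pᶜ).V → ℤ := fun x =>
  match x with
  | .inl v => (G.deg v : ℤ) - (G.degIn P v : ℤ) / 2 - 1 + (G.w v : ℤ)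
  | .inr _ => -1

/-- The data of a semistable root-graph together with its acyclic flow. -/
def IsSemistableRootTriple (S : Finset G.E) (D : (G.subdiv S).V → ℤ)
    (φ : (G.subdiv S).E → ℤ) : Prop :=
  G.IsPseudoDivisor S D ∧ G.IsSemistablePR S D ∧ (G.subdiv S).Acyclic φ ∧
    ∀ v, 2 * D v + (G.subdiv S).divOf φ v = (G.subdiv S).K v

/-- The induced subgraph on a vertex set `W`. -/
def induce (W : Finset G.V) : WGraph where
  V := {v // v ∈ W}
  E := {e // G.src e ∈ W ∧ G.tgt e ∈ W}
  src := fun e => ⟨G.src e.1, e.2.1⟩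
  tgt := fun e => ⟨G.tgt e.1, e.2.2⟩
  w := fun v => G.w v.1

/-- Number of edges between `W` and `Wᶜ` incident to `v`. -/
def degCross (W : Finset G.V) (v : G.V) : ℕ :=
  (Finset.univ.filter (fun e => G.src e = v ∧ G.crossing W e)).card +
    (Finset.univ.filter (fun e => G.tgt e = v ∧ G.crossing W e)).card

/-- A specialization (iterated edge contraction) of weighted graphs. -/
structure Spec (G G' : WGraph) where
  vmap : G.V → G'.V
  emap : G'.E → G.E
  emap_inj : Function.Injective emap
  vmap_surj : Function.Surjective vmap
  src_comm : ∀ e', vmap (G.src (emap e')) = G'.src e'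
  tgt_comm : ∀ e', vmap (G.tgt (emap e')) = G'.tgt e'
  contract_eq : ∀ e : G.E, e ∉ Finset.univ.image emap → vmap (G.src e) = vmap (G.tgt e)
  fiber_conn : ∀ u v : G.V, vmap u = vmap v →
    Relation.ReflTransGen
      (fun a b => ∃ e, e ∉ Finset.univ.image emap ∧
        ((G.src e = a ∧ G.tgt e = b) ∨ (G.src e = b ∧ G.tgt e = a))) u v
  weight_eq : ∀ v' : G'.V,
    (G'.w v' : ℤ) =
      (∑ v ∈ Finset.univ.filter (fun v => vmap v = v'), (G.w v : ℤ)) +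
        ((Finset.univ.filter (fun e : G.E =>
            e ∉ Finset.univ.image emap ∧ vmap (G.src e) = v')).card : ℤ) -
        ((Finset.univ.filter (fun v : G.V => vmap v = v')).card : ℤ) + 1

/-- Pushforward of a divisor along a specialization. -/
def Spec.pushDiv {G G' : WGraph} (σ : Spec G G') (D : G.V → ℤ) : G'.V → ℤ :=
  fun v' => ∑ v ∈ Finset.univ.filter (fun v => σ.vmap v = v'), D v

/-- Pushforward of a polarization along a specialization. -/
def Spec.pushPol {G G' : WGraph} (σ : Spec G G') (μ : G.V → ℚ) : G'.V → ℚ :=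
  fun v' => ∑ v ∈ Finset.univ.filter (fun v => σ.vmap v = v'), μ v

/-- The induced map on vertices of subdivisions. -/
def Spec.subdivVmap {G G' : WGraph} (σ : Spec G G') (S : Finset G.E)
    (S' : Finset G'.E) : (G.subdiv S).V → (G'.subdiv S').V := fun x =>
  match x with
  | .inl v => .inl (σ.vmap v)
  | .inr e =>
    if h : ∃ e' : {e' // e' ∈ S'}, σ.emap e'.1 = e.1 then .inr h.choose
    else .inl (σ.vmap (G.src e.1))

/-- Pushforward of a pseudo-divisor (its divisor part) along a specialization. -/
def Spec.pushSubdivDiv {G G' : WGraph} (σ : Spec G G') (S : Finset G.E)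
    (S' : Finset G'.E) (D : (G.subdiv S).V → ℤ) : (G'.subdiv S').V → ℤ := fun y =>
  ∑ x ∈ Finset.univ.filter (fun x => σ.subdivVmap S S' x = y), D x

/-- Extension by zero along the edge injection of a specialization. -/
def Spec.extendBy {G G' : WGraph} (σ : Spec G G') (x : G'.E → ℝ) : G.E → ℝ :=
  fun e => if h : ∃ e', σ.emap e' = e then x h.choose else 0

/-- Same-graph contraction of subdivisions (for `S ⊆ S'`): the vertex map.
`σb e` selects the endpoint to which the exceptional vertex of a contracted
edge `e ∈ S' \ S` is merged (`true` = target, `false` = source). -/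
def contrVmap (S S' : Finset G.E) (σb : G.E → Bool) :
    (G.subdiv S').V → (G.subdiv S).V := fun x =>
  match x with
  | .inl v => .inl v
  | .inr e =>
    if h : e.1 ∈ S then .inr ⟨e.1, h⟩
    else .inl (if σb e.1 then G.tgt e.1 else G.src e.1)

/-- Same-graph contraction of subdivisions: the edge injection. -/
def contrEmap (S S' : Finset G.E) (hSS : S ⊆ S') (σb : G.E → Bool) :
    (G.subdiv S).E → (G.subdiv S').E := fun x =>
  match x with
  | .inl e =>
    if h : e.1 ∈ S' then .inr (⟨e.1, h⟩, !σb e.1) else .inl ⟨e.1, h⟩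
  | .inr eb => .inr (⟨eb.1.1, hSS eb.1.2⟩, eb.2)

/-- Specialization of pseudo-divisors over a fixed graph. -/
def PDSpec (S' : Finset G.E) (D' : (G.subdiv S').V → ℤ) (S : Finset G.E)
    (D : (G.subdiv S).V → ℤ) : Prop :=
  S ⊆ S' ∧ ∃ σb : G.E → Bool,
    ∀ v, D v = ∑ x ∈ Finset.univ.filter (fun x => G.contrVmap S S' σb x = v), D' x

/-- Specialization of semistable root-graphs over a fixed graph: a
specialization of pseudo-divisors pushing the acyclic flow forward. -/
def RootSpec (S' : Finset G.E) (D' : (G.subdiv S').V → ℤ) (S : Finset G.E)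
    (D : (G.subdiv S).V → ℤ) : Prop :=
  ∃ hSS : S ⊆ S', ∃ σb : G.E → Bool,
    (∀ v, D v = ∑ x ∈ Finset.univ.filter (fun x => G.contrVmap S S' σb x = v), D' x) ∧
    ∀ φ' φ : _, (G.subdiv S').Acyclic φ' →
      (∀ v, 2 * D' v + (G.subdiv S').divOf φ' v = (G.subdiv S').K v) →
      (G.subdiv S).Acyclic φ →
      (∀ v, 2 * D v + (G.subdiv S).divOf φ v = (G.subdiv S).K v) →
      ∀ x, φ x = φ' (G.contrEmap S S' hSS σb x)

/-- Underlying edge of `Γ` of an edge of `Γ^S`. -/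
def underE (S : Finset G.E) : (G.subdiv S).E → G.E := fun x =>
  match x with
  | .inl e => e.1
  | .inr eb => eb.1.1

/-- A specialization of triples `(Γ, E, D) ≥ (Γ', E', D')`. -/
structure TripleSpec (G : WGraph) (S : Finset G.E) (D : (G.subdiv S).V → ℤ)
    (G' : WGraph) (S' : Finset G'.E) (D' : (G'.subdiv S').V → ℤ) where
  base : Spec G G'
  sub : Spec (G.subdiv S) (G'.subdiv S')
  vcomm : ∀ v : G.V, sub.vmap (Sum.inl v) = Sum.inl (base.vmap v)
  ecomm : ∀ x : (G'.subdiv S').E, G.underE S (sub.emap x) = base.emap (G'.underE S' x)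
  edges_sub : ∀ e' ∈ S', base.emap e' ∈ S
  push_eq : ∀ y, D' y = ∑ x ∈ Finset.univ.filter (fun x => sub.vmap x = y), D x

/-- A triple specialization is a specialization of root-graphs when it pushes
the (unique) acyclic flows forward. -/
def TripleSpec.IsRootSpec {G : WGraph} {S : Finset G.E} {D : (G.subdiv S).V → ℤ}
    {G' : WGraph} {S' : Finset G'.E} {D' : (G'.subdiv S').V → ℤ}
    (T : TripleSpec G S D G' S' D') : Prop :=
  ∀ φ φ', (G.subdiv S).Acyclic φ →
    (∀ v, 2 * D v + (G.subdiv S).divOf φ v = (G.subdiv S).K v) →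
    (G'.subdiv S').Acyclic φ' →
    (∀ v, 2 * D' v + (G'.subdiv S').divOf φ' v = (G'.subdiv S').K v) →
    ∀ x, φ' x = φ (T.sub.emap x)

/-- The cone `λ` attached to a flow: nonnegative orthant cut by the cycle
equations. -/
def lambdaSet (φ : G.E → ℤ) : Set (G.E → ℝ) :=
  {x | (∀ e, 0 ≤ x e) ∧ ∀ c : List G.OEdge, G.IsOrientedCycle c →
      ((c.map (fun oe => (G.flowVal φ oe : ℝ) * x oe.1)).sum) = 0}

/-- Its relative interior (intersection with the positive orthant). -/
def lambdaInt (φ : G.E → ℤ) : Set (G.E → ℝ) :=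
  {x | (∀ e, 0 < x e) ∧ ∀ c : List G.OEdge, G.IsOrientedCycle c →
      ((c.map (fun oe => (G.flowVal φ oe : ℝ) * x oe.1)).sum) = 0}

/-- Faces of a cone (supporting-hyperplane definition). -/
def IsFaceOf (F C : Set (G.E → ℝ)) : Prop :=
  F = C ∨ ∃ l : (G.E → ℝ) →ₗ[ℝ] ℝ, (∀ x ∈ C, 0 ≤ l x) ∧ F = C ∩ {x | l x = 0}

/-- Facets: faces of codimension one. -/
def IsFacetOf (F C : Set (G.E → ℝ)) : Prop :=
  G.IsFaceOf F C ∧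
    Module.finrank ℝ (Submodule.span ℝ F) + 1 = Module.finrank ℝ (Submodule.span ℝ C)

/-- The vector `u_V` spanning the subspace `L_E`. -/
def uVec (S : Finset G.E) (W : Finset G.V) : (G.subdiv S).E → ℝ := fun x =>
  match x with
  | .inl _ => 0
  | .inr eb =>
    if G.crossing W eb.1.1 then
      (if (if eb.2 then G.tgt eb.1.1 else G.src eb.1.1) ∈ W then 1 else -1)
    else 0

/-- The subspace `L_E ⊆ ℝ^{E(Γ^S)}`. -/
def LSub (S : Finset G.E) : Submodule ℝ ((G.subdiv S).E → ℝ) :=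
  Submodule.span ℝ {u | ∃ W : Finset G.V, (∀ e, G.crossing W e → e ∈ S) ∧ u = G.uVec S W}

/-- The diagonal map `δ_E : ℝ^{E(Γ)} → ℝ^{E(Γ^S)}`. -/
def deltaMap (S : Finset G.E) (x : G.E → ℝ) : (G.subdiv S).E → ℝ := fun e' =>
  match e' with
  | .inl e => x e.1
  | .inr eb => x eb.1.1

/-- One step of a `φ`-path avoiding the edges of `A`. -/
def phiStep (φ : G.E → ℤ) (A : Finset G.E) (a b : G.V) : Prop :=
  ∃ oe : G.OEdge, oe.1 ∉ A ∧ 0 ≤ G.flowVal φ oe ∧ G.osrc oe = a ∧ G.otgt oe = b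

/-- Reachability by `φ`-paths avoiding the edges of `A`. -/
def PhiReach (φ : G.E → ℤ) (A : Finset G.E) : G.V → G.V → Prop :=
  Relation.ReflTransGen (G.phiStep φ A)

/-- The refinement of `Γ` inserting `m e` vertices in the interior of each
edge `e`. -/
def refine (m : G.E → ℕ) : WGraph where
  V := G.V ⊕ (Σ e : G.E, Fin (m e))
  E := Σ e : G.E, Fin (m e + 1)
  src := fun x =>
    if h : (x.2 : ℕ) = 0 then .inl (G.src x.1)
    else .inr ⟨x.1, ⟨(x.2 : ℕ) - 1, by have := x.2.isLt; omega⟩⟩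
  tgt := fun x =>
    if h : (x.2 : ℕ) = m x.1 then .inl (G.tgt x.1)
    else .inr ⟨x.1, ⟨(x.2 : ℕ), by have := x.2.isLt; omega⟩⟩
  w := fun v =>
    match v with
    | .inl v => G.w v
    | .inr _ => 0

end WGraph

attribute [local instance] Classical.propDecidable

namespace WGraph

variable (G : WGraph)

/-- A walk: a chained list of oriented edges from `x` to `y`. -/
def IsWalk : List G.OEdge → G.V → G.V → Prop
  | [], x, y => x = y
  | oe :: L, x, y => G.osrc oe = x ∧ IsWalk L (G.otgt oe) y

@[simp] lemma isWalk_nil {x y : G.V} : G.IsWalk [] x y ↔ x = y := by rw [IsWalk]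

@[simp] lemma isWalk_cons {oe : G.OEdge} {L : List G.OEdge} {x y : G.V} :
    G.IsWalk (oe :: L) x y ↔ G.osrc oe = x ∧ G.IsWalk L (G.otgt oe) y := by rw [IsWalk]

/-- Vertex sequence of a walk. -/
def wverts (L : List G.OEdge) (x : G.V) : List G.V := x :: L.map G.otgt

@[simp] lemma wverts_length (L : List G.OEdge) (x : G.V) :
    (G.wverts L x).length = L.length + 1 := by simp [wverts]

lemma isWalk_append {L1 L2 : List G.OEdge} {x m y : G.V}
    (h1 : G.IsWalk L1 x m) (h2 : G.IsWalk L2 m y) : G.IsWalk (L1 ++ L2) x y := by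
  induction L1 generalizing x with
  | nil => rw [isWalk_nil] at h1; subst h1; simpa using h2
  | cons oe L ih =>
    rw [isWalk_cons] at h1
    exact ⟨h1.1, ih h1.2⟩

lemma walk_src_get {L : List G.OEdge} {x y : G.V} (h : G.IsWalk L x y)
    (i : ℕ) (hi : i < L.length) :
    G.osrc (L.get ⟨i, hi⟩) = (G.wverts L x).get ⟨i, by simp; omega⟩ := by
  induction L generalizing x i with
  | nil => simp at hi
  | cons oe L ih =>
    rw [isWalk_cons] at h
    cases i with
    | zero => simpa [wverts] using h.1
    | succ n =>
      have h2 := ih h.2 n (by simpa using hi)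
      simpa [wverts] using h2

lemma walk_tgt_get (L : List G.OEdge) (x : G.V)
    (i : ℕ) (hi : i < L.length) :
    G.otgt (L.get ⟨i, hi⟩) = (G.wverts L x).get ⟨i + 1, by simp; omega⟩ := by
  simp [wverts]

lemma walk_last {L : List G.OEdge} {x y : G.V} (h : G.IsWalk L x y) :
    (G.wverts L x).get ⟨L.length, by simp⟩ = y := by
  induction L generalizing x with
  | nil => rw [isWalk_nil] at h; simpa [wverts] using h
  | cons oe L ih =>
    rw [isWalk_cons] at h
    have h2 := ih h.2
    simpa [wverts] using h2

lemma walk_take {L : List G.OEdge} {x y : G.V} (h : G.IsWalk L x y)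
    (n : ℕ) (hn : n ≤ L.length) :
    G.IsWalk (L.take n) x ((G.wverts L x).get ⟨n, by simp; omega⟩) := by
  induction L generalizing x n with
  | nil =>
    simp only [List.length_nil, Nat.le_zero] at hn
    subst hn
    simpa [wverts] using h
  | cons oe L ih =>
    rw [isWalk_cons] at h
    cases n with
    | zero => simpa [wverts] using h.1.symm
    | succ m =>
      rw [List.take_succ_cons, isWalk_cons]
      refine ⟨h.1, ?_⟩
      have h2 := ih h.2 m (by simpa using hn)
      simpa [wverts] using h2

lemma walk_drop {L : List G.OEdge} {x y : G.V} (h : G.IsWalk L x y)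
    (n : ℕ) (hn : n ≤ L.length) :
    G.IsWalk (L.drop n) ((G.wverts L x).get ⟨n, by simp; omega⟩) y := by
  induction L generalizing x n with
  | nil =>
    simp only [List.length_nil, Nat.le_zero] at hn
    subst hn
    simpa [wverts] using h
  | cons oe L ih =>
    rw [isWalk_cons] at h
    cases n with
    | zero =>
      simp only [List.drop_zero]
      rw [isWalk_cons]
      exact ⟨by simp [wverts, h.1], h.2⟩
    | succ m =>
      have h2 := ih h.2 m (by simpa using hn)
      simpa [wverts] using h2

lemma acyclic_no_closed_walk {φ : G.E → ℤ} (hacyc : G.Acyclic φ) (oe0 : G.OEdge)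
    (hpos : 0 < G.flowVal φ oe0) :
    ∀ n (L : List G.OEdge), L.length = n → G.IsWalk L (G.otgt oe0) (G.osrc oe0) →
      (∀ oe ∈ L, 0 ≤ G.flowVal φ oe) → (∀ oe ∈ L, oe.1 ≠ oe0.1) → False := by
  intro n
  induction n using Nat.strong_induction_on with
  | _ n ihn =>
  intro L hlen hwalk hnn hne
  by_cases hnd : (G.wverts L (G.otgt oe0)).Nodup
  · -- vertices distinct: `oe0 :: L` is an oriented cycle, contradicting acyclicity
    set b := G.otgt oe0 with hb
    set a := G.osrc oe0 with ha
    set vs := G.wverts L b with hvs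
    have hvslen : vs.length = L.length + 1 := by simp [hvs]
    have hinj : ∀ (i j : ℕ) (hi : i < vs.length) (hj : j < vs.length),
        vs.get ⟨i, hi⟩ = vs.get ⟨j, hj⟩ → i = j := by
      intro i j hi hj hgeq
      have h2 := List.nodup_iff_injective_get.mp hnd hgeq
      exact congrArg Fin.val h2
    have hv0 : vs.get ⟨0, by omega⟩ = b := rfl
    have hlastv : vs.get ⟨L.length, by omega⟩ = a := G.walk_last hwalk
    have hsrc : ∀ (i : ℕ) (hi : i < L.length),
        G.osrc (L.get ⟨i, hi⟩) = vs.get ⟨i, by omega⟩ :=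
      fun i hi => G.walk_src_get hwalk i hi
    have htgt : ∀ (i : ℕ) (hi : i < L.length),
        G.otgt (L.get ⟨i, hi⟩) = vs.get ⟨i + 1, by omega⟩ :=
      fun i hi => G.walk_tgt_get L b i hi
    have hedge : ∀ (i j : ℕ) (hi : i < L.length) (hj : j < L.length), i < j →
        (L.get ⟨i, hi⟩).1 = (L.get ⟨j, hj⟩).1 → False := by
      intro i j hi hj hlt hfst
      by_cases hbits : (L.get ⟨i, hi⟩).2 = (L.get ⟨j, hj⟩).2
      · have hss : G.osrc (L.get ⟨i, hi⟩) = G.osrc (L.get ⟨j, hj⟩) := by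
          simp only [osrc, hfst, hbits]
        rw [hsrc i hi, hsrc j hj] at hss
        have := hinj _ _ (by omega) (by omega) hss
        omega
      · have hss : G.osrc (L.get ⟨i, hi⟩) = G.otgt (L.get ⟨j, hj⟩) := by
          simp only [osrc, otgt, hfst]
          cases h1 : (L.get ⟨i, hi⟩).2 <;> cases h2 : (L.get ⟨j, hj⟩).2
          · exact absurd (h1.trans h2.symm) hbits
          · simp only [h1, h2, if_true, if_false, Bool.false_eq_true]
          · simp only [h1, h2, if_true, if_false, Bool.false_eq_true]
          · exact absurd (h1.trans h2.symm) hbits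
        rw [hsrc i hi, htgt j hj] at hss
        have := hinj _ _ (by omega) (by omega) hss
        omega
    refine hacyc ⟨oe0 :: L, ⟨List.cons_ne_nil _ _, ?_, ?_, ?_⟩, ?_,
      oe0, List.mem_cons_self, hpos⟩
    · -- distinct underlying edges
      simp only [List.map_cons]
      rw [List.nodup_cons]
      constructor
      · intro hmem
        obtain ⟨oe, hoeL, hoe⟩ := List.mem_map.1 hmem
        exact hne oe hoeL hoe
      · rw [List.nodup_iff_injective_get]
        intro p q hpq
        have hp : (p : ℕ) < L.length := by have := p.isLt; simpa using this
        have hq : (q : ℕ) < L.length := by have := q.isLt; simpa using this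
        have hpq2 : (L.get ⟨p, hp⟩).1 = (L.get ⟨q, hq⟩).1 := by
          simpa using hpq
        by_contra hne2
        have hneq : (p : ℕ) ≠ (q : ℕ) := fun hh => hne2 (Fin.ext hh)
        rcases hneq.lt_or_gt with h | h
        · exact hedge _ _ hp hq h hpq2
        · exact hedge _ _ hq hp h hpq2.symm
    · -- distinct sources
      simp only [List.map_cons]
      rw [List.nodup_cons]
      constructor
      · intro hmem
        obtain ⟨oe, hoeL, hoe⟩ := List.mem_map.1 hmem
        obtain ⟨p, hoeq⟩ := List.mem_iff_get.1 hoeL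
        have hp : (p : ℕ) < L.length := p.isLt
        have h3 : vs.get ⟨(p : ℕ), by omega⟩ = vs.get ⟨L.length, by omega⟩ := by
          rw [hlastv, ← hsrc p hp]
          rw [show L.get ⟨(p : ℕ), hp⟩ = oe by rw [← hoeq]]
          exact hoe
        have := hinj _ _ (by omega) (by omega) h3
        omega
      · rw [List.nodup_iff_injective_get]
        intro p q hpq
        have hp : (p : ℕ) < L.length := by have := p.isLt; simpa using this
        have hq : (q : ℕ) < L.length := by have := q.isLt; simpa using this
        have h3 : vs.get ⟨(p : ℕ), by omega⟩ = vs.get ⟨(q : ℕ), by omega⟩ := by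
          rw [← hsrc _ hp, ← hsrc _ hq]
          simpa using hpq
        exact Fin.ext (hinj _ _ (by omega) (by omega) h3)
    · -- the chain condition
      rintro ⟨i, hi⟩
      simp only [List.length_cons] at hi ⊢
      rcases Nat.lt_or_ge (i + 1) (L.length + 1) with hlt | hge
      · have hmod : (i + 1) % (L.length + 1) = i + 1 := Nat.mod_eq_of_lt hlt
        simp only [hmod]
        cases i with
        | zero =>
          have h0 : 0 < L.length := by omega
          rw [show (oe0 :: L).get ⟨0, by simp⟩ = oe0 from rfl,
            show (oe0 :: L).get ⟨0 + 1, by simp; omega⟩ = L.get ⟨0, h0⟩ from rfl,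
            hsrc 0 h0, hv0]
        | succ s =>
          have hs : s < L.length := by omega
          have hs1 : s + 1 < L.length := by omega
          rw [show (oe0 :: L).get ⟨s + 1, by simp; omega⟩ = L.get ⟨s, hs⟩ from rfl,
            show (oe0 :: L).get ⟨s + 1 + 1, by simp; omega⟩ = L.get ⟨s + 1, hs1⟩ from rfl,
            htgt s hs, hsrc (s + 1) hs1]
      · have hieq : i = L.length := by omega
        have hmod : (i + 1) % (L.length + 1) = 0 := by rw [hieq]; simp
        simp only [hmod]
        rw [show (oe0 :: L).get ⟨0, by simp⟩ = oe0 from rfl]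
        rcases Nat.eq_zero_or_pos L.length with h0 | hposl
        · have hLnil : L = [] := List.length_eq_zero_iff.1 h0
          subst hLnil
          have hi0 : i = 0 := by omega
          subst hi0
          rw [show ([oe0] : List G.OEdge).get ⟨0, by simp⟩ = oe0 from rfl]
          have hba : b = a := by simpa using hwalk
          exact hba
        · obtain ⟨m, hm⟩ : ∃ m, L.length = m + 1 := ⟨L.length - 1, by omega⟩
          have hsm : m < L.length := by omega
          have hfi : (⟨i, by simpa using hi⟩ : Fin (oe0 :: L).length) =
              ⟨m + 1, Nat.succ_lt_succ hsm⟩ := Fin.ext (show i = m + 1 by omega)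
          rw [hfi, show (oe0 :: L).get ⟨m + 1, Nat.succ_lt_succ hsm⟩ =
              L.get ⟨m, hsm⟩ from rfl, htgt _ hsm]
          have hfi2 : (⟨m + 1, by omega⟩ : Fin vs.length) = ⟨L.length, by omega⟩ :=
            Fin.ext (show m + 1 = L.length by omega)
          rw [hfi2]
          exact hlastv
    · intro oe hoe
      rcases List.mem_cons.1 hoe with h | h
      · exact h ▸ le_of_lt hpos
      · exact hnn oe h
  · -- a repeated vertex: shortcut the walk and use the induction hypothesis
    rw [List.nodup_iff_injective_get] at hnd
    simp only [Function.Injective, not_forall] at hnd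
    obtain ⟨i, j, hget, hij⟩ := hnd
    have key : ∀ (p q : Fin (G.wverts L (G.otgt oe0)).length), p < q →
        (G.wverts L (G.otgt oe0)).get p = (G.wverts L (G.otgt oe0)).get q → False := by
      intro p q hpq hpq_eq
      have hp : (p : ℕ) ≤ L.length := by have := p.isLt; simp at this; omega
      have hq : (q : ℕ) ≤ L.length := by have := q.isLt; simp at this; omega
      have w1 := G.walk_take hwalk p hp
      have w2 := G.walk_drop hwalk q hq
      have hteq : (G.wverts L (G.otgt oe0)).get ⟨(p : ℕ), by simp; omega⟩ =
          (G.wverts L (G.otgt oe0)).get ⟨(q : ℕ), by simp; omega⟩ := by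
        convert hpq_eq using 2 <;> exact Fin.ext rfl
      rw [hteq] at w1
      have hww := G.isWalk_append w1 w2
      refine ihn ((L.take p ++ L.drop q).length) ?_ _ rfl hww ?_ ?_
      · simp only [List.length_append, List.length_take, List.length_drop]
        have : (p : ℕ) < (q : ℕ) := hpq
        omega
      · intro oe hoe
        rcases List.mem_append.1 hoe with h | h
        · exact hnn oe (List.take_subset _ _ h)
        · exact hnn oe (List.drop_subset _ _ h)
      · intro oe hoe
        rcases List.mem_append.1 hoe with h | h
        · exact hne oe (List.take_subset _ _ h)
        · exact hne oe (List.drop_subset _ _ h)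
    rcases lt_or_gt_of_ne hij with h | h
    · exact key i j h hget
    · exact key j i h hget.symm

/-- Net flow into a vertex set. -/
def inFlow (φ : G.E → ℤ) (U : Finset G.V) : ℤ :=
  (∑ e : G.E, if G.tgt e ∈ U ∧ G.src e ∉ U then φ e else 0) -
    ∑ e : G.E, if G.src e ∈ U ∧ G.tgt e ∉ U then φ e else 0

lemma sum_divOf (φ : G.E → ℤ) (U : Finset G.V) :
    ∑ v ∈ U, G.divOf φ v = G.inFlow φ U := by
  unfold divOf inFlow
  rw [Finset.sum_sub_distrib, Finset.sum_comm, Finset.sum_comm (s := U)]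
  rw [← Finset.sum_sub_distrib, ← Finset.sum_sub_distrib]
  apply Finset.sum_congr rfl
  intro e _
  rw [Finset.sum_ite_eq, Finset.sum_ite_eq]
  by_cases h1 : G.src e ∈ U <;> by_cases h2 : G.tgt e ∈ U <;> simp [h1, h2]

lemma two_beta (D : G.V → ℤ) (U : Finset G.V) :
    ((2 * (∑ v ∈ U, D v) - (∑ v ∈ U, G.K v) + (G.delta U : ℤ) : ℤ) : ℚ) =
      2 * G.beta G.canPol D U := by
  simp only [beta, canPol]
  rw [← Finset.sum_div]
  push_cast
  ring

lemma inFlow_eq {φ : G.E → ℤ} {D : G.V → ℤ}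
    (heq : ∀ v, 2 * D v + G.divOf φ v = G.K v) (U : Finset G.V) :
    G.inFlow φ U = (∑ v ∈ U, G.K v) - 2 * (∑ v ∈ U, D v) := by
  rw [← G.sum_divOf]
  have : ∑ v ∈ U, (2 * D v + G.divOf φ v) = ∑ v ∈ U, G.K v :=
    Finset.sum_congr rfl fun v _ => heq v
  rw [Finset.sum_add_distrib] at this
  rw [← Finset.mul_sum] at this
  omega

lemma inFlow_le {φ : G.E → ℤ} {D : G.V → ℤ}
    (hss : G.Semistable G.canPol D)
    (heq : ∀ v, 2 * D v + G.divOf φ v = G.K v) (U : Finset G.V)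
    (hU : U ≠ Finset.univ) : G.inFlow φ U ≤ (G.delta U : ℤ) := by
  have h1 := hss U hU
  have h2 : (0 : ℚ) ≤ ((2 * (∑ v ∈ U, D v) - (∑ v ∈ U, G.K v) + (G.delta U : ℤ) : ℤ) : ℚ) := by
    rw [G.two_beta]; positivity
  have h3 : (0 : ℤ) ≤ 2 * (∑ v ∈ U, D v) - (∑ v ∈ U, G.K v) + (G.delta U : ℤ) := by
    exact_mod_cast h2
  rw [G.inFlow_eq heq]
  omega

lemma phiReach_walk {φ : G.E → ℤ} {A : Finset G.E} {x y : G.V}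
    (h : G.PhiReach φ A x y) :
    ∃ L, G.IsWalk L x y ∧ ∀ oe ∈ L, oe.1 ∉ A ∧ 0 ≤ G.flowVal φ oe := by
  induction h with
  | refl => exact ⟨[], by rw [isWalk_nil], by simp⟩
  | @tail c d _ hstep ih =>
    obtain ⟨L, hw, hcond⟩ := ih
    obtain ⟨oe, hA, hnn, hsrc, htgt⟩ := hstep
    refine ⟨L ++ [oe], G.isWalk_append hw ?_, ?_⟩
    · rw [isWalk_cons, isWalk_nil]
      exact ⟨hsrc, htgt⟩
    · intro oe' hoe'
      rcases List.mem_append.1 hoe' with h | h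
      · exact hcond oe' h
      · rcases List.mem_singleton.1 h with rfl
        exact ⟨hA, hnn⟩

lemma flowVal_le_one {φ : G.E → ℤ} {D : G.V → ℤ}
    (hss : G.Semistable G.canPol D) (hacyc : G.Acyclic φ)
    (heq : ∀ v, 2 * D v + G.divOf φ v = G.K v) (oe : G.OEdge) :
    G.flowVal φ oe ≤ 1 := by
  by_contra hcon
  push_neg at hcon
  have h2 : 2 ≤ G.flowVal φ oe := hcon
  set b := G.otgt oe with hb
  set a := G.osrc oe with ha
  set U : Finset G.V := Finset.univ.filter (fun v => G.PhiReach φ {oe.1} b v) with hU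
  have hmemU : ∀ v, v ∈ U ↔ G.PhiReach φ {oe.1} b v := by
    intro v; simp [hU]
  have hbU : b ∈ U := (hmemU b).2 Relation.ReflTransGen.refl
  have haU : a ∉ U := by
    intro haU
    obtain ⟨L, hw, hcond⟩ := G.phiReach_walk ((hmemU a).1 haU)
    exact G.acyclic_no_closed_walk hacyc oe (by omega) L.length L rfl hw
      (fun oe' h => (hcond oe' h).2)
      (fun oe' h => by simpa using (hcond oe' h).1)
  have hclose : ∀ oe' : G.OEdge, oe'.1 ≠ oe.1 → 0 ≤ G.flowVal φ oe' →
      G.osrc oe' ∈ U → G.otgt oe' ∈ U := by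
    intro oe' hne hnn hsrc
    refine (hmemU _).2 (Relation.ReflTransGen.tail ((hmemU _).1 hsrc) ?_)
    exact ⟨oe', by simpa using hne, hnn, rfl, rfl⟩
  have hcross : ∀ e : G.E, G.crossing U e → e ≠ oe.1 →
      (if G.tgt e ∈ U then 1 ≤ φ e else φ e ≤ -1) := by
    intro e hcr hne
    rcases Classical.em (G.tgt e ∈ U) with h1 | h1
    · have h0 : G.src e ∉ U := fun h0 => hcr (by simp [h0, h1])
      simp only [h1, if_true]
      by_contra hle
      push_neg at hle
      have hin : G.otgt (e, false) ∈ U :=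
        hclose (e, false) (by simpa using hne) (by simp [flowVal]; omega)
          (by simpa [osrc] using h1)
      exact h0 (by simpa [otgt] using hin)
    · have h0 : G.src e ∈ U := by
        rcases Classical.em (G.src e ∈ U) with h | h
        · exact h
        · exact absurd (by simp [h, h1] : (G.src e ∈ U) = (G.tgt e ∈ U)) hcr
      simp only [h1, if_false]
      by_contra hle
      push_neg at hle
      have hin : G.otgt (e, true) ∈ U :=
        hclose (e, true) (by simpa using hne) (by simp [flowVal]; omega)
          (by simpa [osrc] using h0)
      exact h1 (by simpa [otgt] using hin)
  have hcrossOe : G.crossing U oe.1 ∧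
      (if G.tgt oe.1 ∈ U then 2 ≤ φ oe.1 else φ oe.1 ≤ -2) := by
    cases hbo : oe.2
    · have hsb : G.src oe.1 = b := by rw [hb]; simp [otgt, hbo]
      have hta : G.tgt oe.1 = a := by rw [ha]; simp [osrc, hbo]
      have hf : G.flowVal φ oe = -φ oe.1 := by simp [flowVal, hbo]
      constructor
      · simp only [crossing]
        rw [hsb, hta]
        simp [hbU, haU]
      · rw [hta, if_neg haU]
        omega
    · have hsb : G.src oe.1 = a := by rw [ha]; simp [osrc, hbo]
      have hta : G.tgt oe.1 = b := by rw [hb]; simp [otgt, hbo]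
      have hf : G.flowVal φ oe = φ oe.1 := by simp [flowVal, hbo]
      constructor
      · simp only [crossing]
        rw [hsb, hta]
        simp [hbU, haU]
      · rw [hta, if_pos hbU]
        omega
  have hUne : U ≠ Finset.univ := fun h => haU (h ▸ Finset.mem_univ a)
  have hle := G.inFlow_le hss heq U hUne
  have hdelta : (G.delta U : ℤ) = ∑ e : G.E, (if G.crossing U e then 1 else 0 : ℤ) := by
    rw [delta, Finset.card_filter]
    push_cast
    rfl
  have hflow : G.inFlow φ U - (G.delta U : ℤ) = ∑ e : G.E,
      ((if G.tgt e ∈ U ∧ G.src e ∉ U then φ e else 0) -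
        (if G.src e ∈ U ∧ G.tgt e ∉ U then φ e else 0) -
        (if G.crossing U e then 1 else 0)) := by
    rw [hdelta, inFlow, Finset.sum_sub_distrib, Finset.sum_sub_distrib]
  have hterm : ∀ e : G.E,
      0 ≤ (if G.tgt e ∈ U ∧ G.src e ∉ U then φ e else 0) -
        (if G.src e ∈ U ∧ G.tgt e ∉ U then φ e else 0) -
        (if G.crossing U e then 1 else 0) := by
    intro e
    by_cases hcr : G.crossing U e
    · rcases Classical.em (G.tgt e ∈ U) with h1 | h1
      · have h0 : G.src e ∉ U := fun h0 => hcr (by simp [h0, h1])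
        have hval : 1 ≤ φ e := by
          by_cases he : e = oe.1
          · have hoe := hcrossOe.2
            rw [he] at h1 ⊢
            rw [if_pos h1] at hoe
            omega
          · have hc := hcross e hcr he
            rwa [if_pos h1] at hc
        rw [if_pos ⟨h1, h0⟩, if_neg (fun hh : _ ∧ _ => h0 hh.1), if_pos hcr]
        omega
      · have h0 : G.src e ∈ U := by
          rcases Classical.em (G.src e ∈ U) with h | h
          · exact h
          · exact absurd (by simp [h, h1] : (G.src e ∈ U) = (G.tgt e ∈ U)) hcr
        have hval : φ e ≤ -1 := by
          by_cases he : e = oe.1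
          · have hoe := hcrossOe.2
            rw [he] at h1 ⊢
            rw [if_neg h1] at hoe
            omega
          · have hc := hcross e hcr he
            rwa [if_neg h1] at hc
        rw [if_neg (fun hh : _ ∧ _ => h1 hh.1), if_pos ⟨h0, h1⟩, if_pos hcr]
        omega
    · have h1 : ¬(G.tgt e ∈ U ∧ G.src e ∉ U) := by
        rintro ⟨ht, hs⟩; exact hcr (by simp [crossing, hs, ht])
      have h2 : ¬(G.src e ∈ U ∧ G.tgt e ∉ U) := by
        rintro ⟨hs, ht⟩; exact hcr (by simp [crossing, hs, ht])
      rw [if_neg h1, if_neg h2, if_neg hcr]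
      omega
  have hstrict : 0 < (if G.tgt oe.1 ∈ U ∧ G.src oe.1 ∉ U then φ oe.1 else 0) -
      (if G.src oe.1 ∈ U ∧ G.tgt oe.1 ∉ U then φ oe.1 else 0) -
      (if G.crossing U oe.1 then 1 else 0) := by
    obtain ⟨hcr, hval⟩ := hcrossOe
    rcases Classical.em (G.tgt oe.1 ∈ U) with h1 | h1
    · have h0 : G.src oe.1 ∉ U := fun h0 => hcr (by simp [h0, h1])
      rw [if_pos h1] at hval
      rw [if_pos ⟨h1, h0⟩, if_neg (fun hh : _ ∧ _ => h0 hh.1), if_pos hcr]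
      omega
    · have h0 : G.src oe.1 ∈ U := by
        rcases Classical.em (G.src oe.1 ∈ U) with h | h
        · exact h
        · exact absurd (by simp [h, h1] : (G.src oe.1 ∈ U) = (G.tgt oe.1 ∈ U)) hcr
      rw [if_neg h1] at hval
      rw [if_neg (fun hh : _ ∧ _ => h1 hh.1), if_pos ⟨h0, h1⟩, if_pos hcr]
      omega
  have hsum : 0 < G.inFlow φ U - (G.delta U : ℤ) := by
    rw [hflow]
    exact Finset.sum_pos' (fun e _ => hterm e) ⟨oe.1, Finset.mem_univ _, hstrict⟩
  omega

lemma cross_phi {φ : G.E → ℤ} {D : G.V → ℤ}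
    (hss : G.Semistable G.canPol D) (hacyc : G.Acyclic φ)
    (heq : ∀ v, 2 * D v + G.divOf φ v = G.K v) {W : Finset G.V}
    (hzero : G.beta G.canPol D W = 0) :
    ∀ e : G.E, G.crossing W e → (if G.tgt e ∈ W then φ e = 1 else φ e = -1) := by
  have hIF : G.inFlow φ W = (G.delta W : ℤ) := by
    rw [G.inFlow_eq heq]
    have h2 : ((2 * (∑ v ∈ W, D v) - (∑ v ∈ W, G.K v) + (G.delta W : ℤ) : ℤ) : ℚ) = 0 := by
      rw [G.two_beta, hzero]; ring
    have h3 : 2 * (∑ v ∈ W, D v) - (∑ v ∈ W, G.K v) + (G.delta W : ℤ) = 0 := by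
      exact_mod_cast h2
    omega
  have hsum : G.inFlow φ W = ∑ e ∈ Finset.univ.filter (fun e => G.crossing W e),
      (if G.tgt e ∈ W then φ e else -φ e) := by
    rw [inFlow, ← Finset.sum_sub_distrib, Finset.sum_filter]
    apply Finset.sum_congr rfl
    intro e _
    by_cases h1 : G.src e ∈ W <;> by_cases h2 : G.tgt e ∈ W <;>
      simp [crossing, h1, h2]
  have hle1 : ∀ e ∈ Finset.univ.filter (fun e => G.crossing W e),
      (if G.tgt e ∈ W then φ e else -φ e) ≤ 1 := by
    intro e he
    by_cases h2 : G.tgt e ∈ W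
    · have hb := G.flowVal_le_one hss hacyc heq (e, true)
      simp only [flowVal, if_pos, if_true] at hb
      simpa [h2] using hb
    · have hb := G.flowVal_le_one hss hacyc heq (e, false)
      simp only [flowVal, Bool.false_eq_true, if_false] at hb
      simpa [h2] using hb
  have hzero2 : ∑ e ∈ Finset.univ.filter (fun e => G.crossing W e),
      ((1 : ℤ) - (if G.tgt e ∈ W then φ e else -φ e)) = 0 := by
    rw [Finset.sum_sub_distrib, ← hsum, hIF, Finset.sum_const, delta]
    simp
  have hall := (Finset.sum_eq_zero_iff_of_nonneg
    (fun e he => by have := hle1 e he; omega)).1 hzero2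
  intro e hcr
  have h := hall e (Finset.mem_filter.2 ⟨Finset.mem_univ _, hcr⟩)
  by_cases h2 : G.tgt e ∈ W
  · rw [if_pos h2] at h ⊢; omega
  · rw [if_neg h2] at h ⊢; omega

lemma sum_induceE {M : Type} [AddCommMonoid M] (X : Finset G.V) (g' : G.E → M) :
    ∑ e : (G.induce X).E, g' e.1 =
      ∑ e ∈ Finset.univ.filter (fun e => G.src e ∈ X ∧ G.tgt e ∈ X), g' e := by
  refine Finset.sum_bij' (fun (e : (G.induce X).E) _ => e.1)
    (fun e he => (⟨e, (Finset.mem_filter.mp he).2⟩ : (G.induce X).E)) ?_ ?_ ?_ ?_ ?_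
  · intro a _
    exact Finset.mem_filter.mpr ⟨Finset.mem_univ _, a.2⟩
  · intro a _
    exact Finset.mem_univ _
  · intro a _
    rfl
  · intro a _
    rfl
  · intro a _
    rfl

lemma card_induce_filter (X : Finset G.V) (q : G.E → Prop) [DecidablePred q]
    (q' : (G.induce X).E → Prop) [DecidablePred q']
    (hq : ∀ e : (G.induce X).E, q' e ↔ q e.1) :
    ((Finset.univ.filter q').card : ℤ) =
      ∑ e : G.E, if (G.src e ∈ X ∧ G.tgt e ∈ X) ∧ q e then 1 else 0 := by
  rw [Finset.card_filter]
  push_cast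
  have h1 : ∑ e : (G.induce X).E, (if q' e then (1 : ℤ) else 0) =
      ∑ e : (G.induce X).E, (fun e' => if q e' then (1 : ℤ) else 0) e.1 := by
    apply Finset.sum_congr rfl
    intro e _
    show _ = if q e.1 then (1 : ℤ) else 0
    by_cases h : q e.1
    · rw [if_pos ((hq e).2 h), if_pos h]
    · rw [if_neg (fun hh => h ((hq e).1 hh)), if_neg h]
  rw [h1, G.sum_induceE X (fun e' => if q e' then (1 : ℤ) else 0), Finset.sum_filter]
  apply Finset.sum_congr rfl
  intro e _
  by_cases h1 : G.src e ∈ X ∧ G.tgt e ∈ X <;> by_cases h2 : q e <;> simp [h1, h2]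

lemma deg_induce (X : Finset G.V) (v : (G.induce X).V) :
    ((G.induce X).deg v : ℤ) + (G.degCross X v.1 : ℤ) = (G.deg v.1 : ℤ) := by
  have hsrc : ∀ e : (G.induce X).E, ((G.induce X).src e = v) ↔ (G.src e.1 = v.1) :=
    fun e => ⟨fun h => congrArg Subtype.val h, fun h => Subtype.ext h⟩
  have htgt : ∀ e : (G.induce X).E, ((G.induce X).tgt e = v) ↔ (G.tgt e.1 = v.1) :=
    fun e => ⟨fun h => congrArg Subtype.val h, fun h => Subtype.ext h⟩
  have hv : v.1 ∈ X := v.2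
  rw [deg, deg, degCross]
  push_cast
  rw [G.card_induce_filter X (fun e => G.src e = v.1) _ hsrc,
    G.card_induce_filter X (fun e => G.tgt e = v.1) _ htgt,
    Finset.card_filter, Finset.card_filter, Finset.card_filter, Finset.card_filter]
  push_cast
  rw [← Finset.sum_add_distrib, ← Finset.sum_add_distrib, ← Finset.sum_add_distrib,
    ← Finset.sum_add_distrib]
  apply Finset.sum_congr rfl
  intro e _
  by_cases hs : G.src e = v.1 <;> by_cases ht : G.tgt e = v.1 <;>
    by_cases hsX : G.src e ∈ X <;> by_cases htX : G.tgt e ∈ X <;>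
      simp_all [crossing]

lemma K_induce (X : Finset G.V) (v : (G.induce X).V) :
    (G.induce X).K v = G.K v.1 - (G.degCross X v.1 : ℤ) := by
  rw [K, K]
  have h1 := G.deg_induce X v
  have h2 : (G.induce X).w v = G.w v.1 := rfl
  rw [h2]
  omega

lemma divOf_induce (X : Finset G.V) (φ : G.E → ℤ) (v : (G.induce X).V) :
    (G.induce X).divOf (fun e => φ e.1) v =
      G.divOf φ v.1
      - (∑ e : G.E, if G.tgt e = v.1 ∧ ¬(G.src e ∈ X ∧ G.tgt e ∈ X) then φ e else 0)
      + (∑ e : G.E, if G.src e = v.1 ∧ ¬(G.src e ∈ X ∧ G.tgt e ∈ X) then φ e else 0) := by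
  rw [divOf, divOf]
  have h1 : ∑ e : (G.induce X).E, (if (G.induce X).tgt e = v then φ e.1 else 0) =
      ∑ e ∈ Finset.univ.filter (fun e => G.src e ∈ X ∧ G.tgt e ∈ X),
        (if G.tgt e = v.1 then φ e else 0) := by
    have hc : ∀ e : (G.induce X).E, (if (G.induce X).tgt e = v then φ e.1 else 0) =
        (fun e' => if G.tgt e' = v.1 then φ e' else 0) e.1 := by
      intro e
      show _ = if G.tgt e.1 = v.1 then φ e.1 else 0
      by_cases h : G.tgt e.1 = v.1
      · erw [if_pos (Subtype.ext h), if_pos h]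
      · erw [if_neg (fun hh => h (congrArg Subtype.val hh)), if_neg h]
    rw [Finset.sum_congr rfl (fun e _ => hc e),
      G.sum_induceE X (fun e' => if G.tgt e' = v.1 then φ e' else 0)]
  have h2 : ∑ e : (G.induce X).E, (if (G.induce X).src e = v then φ e.1 else 0) =
      ∑ e ∈ Finset.univ.filter (fun e => G.src e ∈ X ∧ G.tgt e ∈ X),
        (if G.src e = v.1 then φ e else 0) := by
    have hc : ∀ e : (G.induce X).E, (if (G.induce X).src e = v then φ e.1 else 0) =
        (fun e' => if G.src e' = v.1 then φ e' else 0) e.1 := by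
      intro e
      show _ = if G.src e.1 = v.1 then φ e.1 else 0
      by_cases h : G.src e.1 = v.1
      · erw [if_pos (Subtype.ext h), if_pos h]
      · erw [if_neg (fun hh => h (congrArg Subtype.val hh)), if_neg h]
    rw [Finset.sum_congr rfl (fun e _ => hc e),
      G.sum_induceE X (fun e' => if G.src e' = v.1 then φ e' else 0)]
  rw [h1, h2, Finset.sum_filter, Finset.sum_filter]
  rw [← Finset.sum_sub_distrib, ← Finset.sum_sub_distrib, ← Finset.sum_sub_distrib,
    ← Finset.sum_add_distrib]
  apply Finset.sum_congr rfl
  intro e _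
  by_cases hb : G.src e ∈ X ∧ G.tgt e ∈ X
  · simp only [hb.1, hb.2, and_true, true_and, not_true, and_false, if_false, if_true,
      not_true_eq_false]
    ring
  · simp only [hb, if_false, not_false_iff, and_true, if_true]
    by_cases ht : G.tgt e = v.1 <;> by_cases hs : G.src e = v.1 <;>
        simp only [ht, hs, if_true, if_false] <;> ring

lemma crossing_compl (W : Finset G.V) (e : G.E) : G.crossing Wᶜ e ↔ G.crossing W e := by
  by_cases h1 : G.src e ∈ W <;> by_cases h2 : G.tgt e ∈ W <;>
    simp [crossing, h1, h2]

lemma degCross_compl (W : Finset G.V) (v : G.V) : G.degCross Wᶜ v = G.degCross W v := by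
  unfold degCross
  congr 1
  · apply congrArg
    apply Finset.filter_congr
    intro e _
    rw [G.crossing_compl W e]
  · apply congrArg
    apply Finset.filter_congr
    intro e _
    rw [G.crossing_compl W e]

lemma sum_card_cross (X : Finset G.V) (A : Finset G.V) :
    ∑ v ∈ A, (G.degCross X v : ℤ) =
      ∑ e : G.E, ((if G.src e ∈ A ∧ G.crossing X e then 1 else 0) +
        (if G.tgt e ∈ A ∧ G.crossing X e then (1 : ℤ) else 0)) := by
  unfold degCross
  push_cast
  rw [Finset.sum_add_distrib]
  have h1 : ∀ (q : G.E → G.V), (∑ v ∈ A,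
      ((Finset.univ.filter (fun e => q e = v ∧ G.crossing X e)).card : ℤ)) =
      ∑ e : G.E, (if q e ∈ A ∧ G.crossing X e then (1 : ℤ) else 0) := by
    intro q
    have : ∀ v, ((Finset.univ.filter (fun e => q e = v ∧ G.crossing X e)).card : ℤ) =
        ∑ e : G.E, (if q e = v ∧ G.crossing X e then (1 : ℤ) else 0) := by
      intro v
      rw [Finset.card_filter]
      push_cast
      rfl
    rw [Finset.sum_congr rfl (fun v _ => this v), Finset.sum_comm]
    apply Finset.sum_congr rfl
    intro e _
    by_cases hcr : G.crossing X e
    · simp only [hcr, and_true]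
      rw [Finset.sum_ite_eq]
    · simp [hcr]
  rw [h1 G.src, h1 G.tgt]
  exact Finset.sum_add_distrib.symm

lemma delta_induce (X : Finset G.V) (U : Finset (G.induce X).V)
    (hsub : ∀ x ∈ U.image Subtype.val, x ∈ X) :
    (G.delta (U.image Subtype.val) : ℤ) =
      ((G.induce X).delta U : ℤ) + ∑ v ∈ U.image Subtype.val, (G.degCross X v : ℤ) := by
  set U' := U.image Subtype.val with hU'
  have hmem : ∀ (u : (G.induce X).V), u.1 ∈ U' ↔ u ∈ U := by
    intro u
    erw [hU', Finset.mem_image]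
    constructor
    · rintro ⟨x, hx, hxx⟩
      rwa [show u = x from Subtype.ext hxx.symm]
    · intro hu
      exact ⟨u, hu, rfl⟩
  have hq : ∀ e : (G.induce X).E, (G.induce X).crossing U e ↔ G.crossing U' e.1 := by
    intro e
    unfold crossing
    rw [show ((G.induce X).src e ∈ U) = (G.src e.1 ∈ U') from by rw [← hmem]; rfl,
      show ((G.induce X).tgt e ∈ U) = (G.tgt e.1 ∈ U') from by rw [← hmem]; rfl]
  rw [G.sum_card_cross, delta, delta,
    G.card_induce_filter X (fun e => G.crossing U' e) _ hq, Finset.card_filter]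
  push_cast
  rw [← Finset.sum_add_distrib]
  try rw [← Finset.sum_add_distrib]
  apply Finset.sum_congr rfl
  intro e _
  by_cases hsU : G.src e ∈ U' <;> by_cases htU : G.tgt e ∈ U'
  · have hsX := hsub _ hsU
    have htX := hsub _ htU
    simp [crossing, hsU, htU, hsX, htX]
  · have hsX := hsub _ hsU
    by_cases htX : G.tgt e ∈ X <;> simp [crossing, hsU, htU, hsX, htX]
  · have htX := hsub _ htU
    by_cases hsX : G.src e ∈ X <;> simp [crossing, hsU, htU, hsX, htX]
  · simp [crossing, hsU, htU]

lemma beta_induce (X : Finset G.V) (μ : G.V → ℚ) (DD : G.V → ℤ)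
    (U : Finset (G.induce X).V) :
    (G.induce X).beta (fun v => μ v.1 - (G.degCross X v.1 : ℚ) / 2)
        (fun v => DD v.1) U =
      G.beta μ DD (U.image Subtype.val) := by
  set U' := U.image Subtype.val with hU'
  have hsub : ∀ x ∈ U', x ∈ X := by
    intro x hx
    erw [hU', Finset.mem_image] at hx
    obtain ⟨u, _, rfl⟩ := hx
    exact u.2
  have hinj : Set.InjOn Subtype.val (U : Set (G.induce X).V) :=
    fun a _ b _ h => Subtype.ext h
  have hsum : ∀ f : G.V → ℚ, ∑ v ∈ U, f v.1 = ∑ x ∈ U', f x := by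
    intro f
    erw [hU', Finset.sum_image (fun a _ b _ h => Subtype.ext h)]
    rfl
  have hdelta := G.delta_induce X U hsub
  unfold beta
  rw [show (∑ v ∈ U, ((fun v : (G.induce X).V => DD v.1) v : ℚ)) =
      ∑ x ∈ U', (DD x : ℚ) from hsum (fun x => (DD x : ℚ))]
  rw [show (∑ v ∈ U, (fun v : (G.induce X).V =>
        μ v.1 - (G.degCross X v.1 : ℚ) / 2) v) =
      ∑ x ∈ U', (μ x - (G.degCross X x : ℚ) / 2) from
        hsum (fun x => μ x - (G.degCross X x : ℚ) / 2)]
  rw [Finset.sum_sub_distrib]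
  have hdq : ((G.delta U' : ℤ) : ℚ) =
      (((G.induce X).delta U : ℤ) : ℚ) + ∑ v ∈ U', ((G.degCross X v : ℤ) : ℚ) := by
    exact_mod_cast congrArg (fun z : ℤ => (z : ℚ)) hdelta
  push_cast at hdq
  rw [hdq, ← Finset.sum_div]
  ring

lemma beta_shift (μ : G.V → ℚ) (DD : G.V → ℤ) (c : G.V → ℤ) (A : Finset G.V) :
    G.beta μ (fun x => DD x - c x) A = G.beta μ DD A - ∑ v ∈ A, (c v : ℚ) := by
  unfold beta
  push_cast
  rw [Finset.sum_sub_distrib]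
  ring

lemma beta_union (μ : G.V → ℚ) (DD : G.V → ℤ) (A W : Finset G.V)
    (hdisj : ∀ x ∈ A, x ∉ W) :
    G.beta μ DD (A ∪ W) =
      G.beta μ DD A + G.beta μ DD W - ∑ v ∈ A, (G.degCross W v : ℚ) := by
  have hd : Disjoint A W := Finset.disjoint_left.mpr hdisj
  have hcount : (G.delta (A ∪ W) : ℤ) + 2 * ∑ v ∈ A, (G.degCross W v : ℤ) =
      (G.delta A : ℤ) + (G.delta W : ℤ) := by
    rw [G.sum_card_cross, delta, delta, delta, Finset.card_filter,
      Finset.card_filter, Finset.card_filter]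
    push_cast
    rw [Finset.mul_sum, ← Finset.sum_add_distrib, ← Finset.sum_add_distrib]
    apply Finset.sum_congr rfl
    intro e _
    by_cases hsa : G.src e ∈ A <;> by_cases hta : G.tgt e ∈ A <;>
      by_cases hsw : G.src e ∈ W <;> by_cases htw : G.tgt e ∈ W
    all_goals first
      | exact absurd hsw (hdisj _ hsa)
      | exact absurd htw (hdisj _ hta)
      | (simp [crossing, Finset.mem_union, hsa, hta, hsw, htw])
  unfold beta
  rw [Finset.sum_union hd, Finset.sum_union hd]
  have hdq : ((G.delta (A ∪ W) : ℤ) : ℚ) =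
      ((G.delta A : ℤ) : ℚ) + ((G.delta W : ℤ) : ℚ)
        - 2 * ∑ v ∈ A, ((G.degCross W v : ℤ) : ℚ) := by
    have := congrArg (fun z : ℤ => (z : ℚ)) hcount
    push_cast at this ⊢
    linarith
  push_cast at hdq
  push_cast
  rw [hdq]
  ring

lemma acyclic_induce (X : Finset G.V) {φ : G.E → ℤ} (hacyc : G.Acyclic φ) :
    (G.induce X).Acyclic (fun e => φ e.1) := by
  rintro ⟨c, ⟨hne, hnd1, hnd2, hchain⟩, hnn, oe, hoe, hposv⟩
  apply hacyc
  set f : (G.induce X).OEdge → G.OEdge := fun oe => (oe.1.1, oe.2) with hf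
  have hosrc : ∀ oe' : (G.induce X).OEdge,
      G.osrc (f oe') = ((G.induce X).osrc oe').1 := by
    intro oe'
    cases hb : oe'.2 <;>
      simp only [osrc, hf, hb, if_true, if_false, Bool.false_eq_true] <;> rfl
  have hotgt : ∀ oe' : (G.induce X).OEdge,
      G.otgt (f oe') = ((G.induce X).otgt oe').1 := by
    intro oe'
    cases hb : oe'.2 <;>
      simp only [otgt, hf, hb, if_true, if_false, Bool.false_eq_true] <;> rfl
  have hflow : ∀ oe' : (G.induce X).OEdge,
      G.flowVal φ (f oe') = (G.induce X).flowVal (fun e => φ e.1) oe' := by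
    intro oe'
    cases hb : oe'.2 <;>
      simp only [flowVal, hf, hb, if_true, if_false, Bool.false_eq_true]
  refine ⟨c.map f, ⟨by simpa using hne, ?_, ?_, ?_⟩, ?_, f oe,
    List.mem_map_of_mem hoe, by rw [hflow]; exact hposv⟩
  · rw [List.map_map]
    have hcomp : Prod.fst ∘ f = Subtype.val ∘ (Prod.fst :
        (G.induce X).OEdge → (G.induce X).E) := rfl
    erw [hcomp, ← List.map_map]
    exact hnd1.map Subtype.val_injective
  · rw [List.map_map]
    have hcomp : G.osrc ∘ f = Subtype.val ∘ (G.induce X).osrc := funext hosrc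
    erw [hcomp, ← List.map_map]
    exact hnd2.map Subtype.val_injective
  · rintro ⟨i, hi⟩
    have hlen : (c.map f).length = c.length := List.length_map f
    have hi' : i < c.length := by rwa [hlen] at hi
    have hmodlt : (i + 1) % c.length < c.length := Nat.mod_lt _ (by omega)
    have e1 : (c.map f).get ⟨i, hi⟩ = f (c.get ⟨i, hi'⟩) := by
      simp [List.getElem_map]
    have e2 : (c.map f).get ⟨(i + 1) % (c.map f).length, Nat.mod_lt _ (by omega)⟩ =
        f (c.get ⟨(i + 1) % c.length, hmodlt⟩) := by
      simp only [hlen]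
      simp [List.getElem_map]
    rw [e1, e2, hosrc, hotgt]
    exact congrArg Subtype.val (hchain ⟨i, hi'⟩)
  · intro oe' hoe'
    obtain ⟨x, hx, rfl⟩ := List.mem_map.1 hoe'
    rw [hflow]
    exact hnn x hx

end WGraph

/-- If `D` is a semistable root divisor on a connected
graph (acyclic flow `φ` with `2D + Div(φ) = K_Γ`) and `β_D(V) = 0` for a
proper nonempty `V`, then the restrictions to the induced subgraphs on `V`
and `Vᶜ` (with the divisor corrected on `Vᶜ` by the crossing degree) are
again semistable root-graphs with respect to the canonical polarizations
`μᵢ(v) = μ(v) - deg_{E(V,Vᶜ)}(v)/2`. -/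
theorem stmt13 (G : WGraph) (hconn : G.Connected) (D : G.V → ℤ)
    (hss : G.Semistable G.canPol D) (φ : G.E → ℤ) (hacyc : G.Acyclic φ)
    (heq : ∀ v, 2 * D v + G.divOf φ v = G.K v)
    (W : Finset G.V) (hW : W ≠ Finset.univ) (hW' : W.Nonempty)
    (hbeta : G.beta G.canPol D W = 0) :
    ((G.induce W).Acyclic (fun e => φ e.1) ∧
      (∀ v : (G.induce W).V,
        2 * D v.1 + (G.induce W).divOf (fun e => φ e.1) v = (G.induce W).K v) ∧
      (G.induce W).Semistable
        (fun v => G.canPol v.1 - (G.degCross W v.1 : ℚ) / 2) (fun v => D v.1)) ∧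
    ((G.induce Wᶜ).Acyclic (fun e => φ e.1) ∧
      (∀ v : (G.induce Wᶜ).V,
        2 * (D v.1 - (G.degCross W v.1 : ℤ)) +
            (G.induce Wᶜ).divOf (fun e => φ e.1) v = (G.induce Wᶜ).K v) ∧
      (G.induce Wᶜ).Semistable
        (fun v => G.canPol v.1 - (G.degCross W v.1 : ℚ) / 2)
        (fun v => D v.1 - (G.degCross W v.1 : ℤ))) := by
  have hphi := G.cross_phi hss hacyc heq hbeta
  have hWex : ∃ x, x ∉ W := by
    by_contra h
    push_neg at h
    exact hW (Finset.eq_univ_of_forall h)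
  constructor
  · -- the W side
    refine ⟨G.acyclic_induce W hacyc, ?_, ?_⟩
    · intro v
      have hdiv := G.divOf_induce W φ v
      have hK := G.K_induce W v
      have hv : v.1 ∈ W := v.2
      have hdc : (G.degCross W v.1 : ℤ) =
          ((Finset.univ.filter (fun e => G.src e = v.1 ∧ G.crossing W e)).card : ℤ) +
          ((Finset.univ.filter (fun e => G.tgt e = v.1 ∧ G.crossing W e)).card : ℤ) := by
        rw [WGraph.degCross]; push_cast; ring
      have hc1 : (∑ e : G.E, if G.tgt e = v.1 ∧ ¬(G.src e ∈ W ∧ G.tgt e ∈ W)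
            then φ e else 0) =
          ((Finset.univ.filter (fun e => G.tgt e = v.1 ∧ G.crossing W e)).card : ℤ) := by
        rw [Finset.card_filter]
        push_cast
        apply Finset.sum_congr rfl
        intro e _
        by_cases ht : G.tgt e = v.1
        · have htW : G.tgt e ∈ W := by rw [ht]; exact hv
          by_cases hs : G.src e ∈ W
          · have h1 : ¬(G.tgt e = v.1 ∧ ¬(G.src e ∈ W ∧ G.tgt e ∈ W)) :=
              fun hh => hh.2 ⟨hs, htW⟩
            have h2 : ¬(G.tgt e = v.1 ∧ G.crossing W e) :=
              fun hh => hh.2 (by simp [hs, htW] : (G.src _ ∈ W) = (G.tgt _ ∈ W))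
            rw [if_neg h1, if_neg h2]
          · have hcr : G.crossing W e := by simp [WGraph.crossing, hs, htW]
            have hval := hphi e hcr
            rw [if_pos htW] at hval
            have hnb : ¬(G.src e ∈ W ∧ G.tgt e ∈ W) := fun hh => hs hh.1
            rw [if_pos ⟨ht, hnb⟩, if_pos ⟨ht, hcr⟩, hval]
        · have h1 : ¬(G.tgt e = v.1 ∧ ¬(G.src e ∈ W ∧ G.tgt e ∈ W)) := fun hh => ht hh.1
          have h2 : ¬(G.tgt e = v.1 ∧ G.crossing W e) := fun hh => ht hh.1
          rw [if_neg h1, if_neg h2]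
      have hc2 : (∑ e : G.E, if G.src e = v.1 ∧ ¬(G.src e ∈ W ∧ G.tgt e ∈ W)
            then φ e else 0) =
          -((Finset.univ.filter (fun e => G.src e = v.1 ∧ G.crossing W e)).card : ℤ) := by
        rw [Finset.card_filter]
        push_cast
        rw [← Finset.sum_neg_distrib]
        apply Finset.sum_congr rfl
        intro e _
        by_cases hs : G.src e = v.1
        · have hsW : G.src e ∈ W := by rw [hs]; exact hv
          by_cases ht : G.tgt e ∈ W
          · have h1 : ¬(G.src e = v.1 ∧ ¬(G.src e ∈ W ∧ G.tgt e ∈ W)) :=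
              fun hh => hh.2 ⟨hsW, ht⟩
            have h2 : ¬(G.src e = v.1 ∧ G.crossing W e) :=
              fun hh => hh.2 (by simp [hsW, ht] : (G.src _ ∈ W) = (G.tgt _ ∈ W))
            rw [if_neg h1, if_neg h2, neg_zero]
          · have hcr : G.crossing W e := by simp [WGraph.crossing, hsW, ht]
            have hval := hphi e hcr
            rw [if_neg ht] at hval
            have hnb : ¬(G.src e ∈ W ∧ G.tgt e ∈ W) := fun hh => ht hh.2
            rw [if_pos ⟨hs, hnb⟩, if_pos ⟨hs, hcr⟩, hval]
        · have h1 : ¬(G.src e = v.1 ∧ ¬(G.src e ∈ W ∧ G.tgt e ∈ W)) := fun hh => hs hh.1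
          have h2 : ¬(G.src e = v.1 ∧ G.crossing W e) := fun hh => hs hh.1
          rw [if_neg h1, if_neg h2, neg_zero]
      have h0 := heq v.1
      rw [hdiv, hK, hc1, hc2]
      omega
    · intro U hU
      rw [G.beta_induce W G.canPol D U]
      apply hss
      intro hUuniv
      obtain ⟨x, hx⟩ := hWex
      have : x ∈ U.image Subtype.val := hUuniv ▸ Finset.mem_univ x
      erw [Finset.mem_image] at this
      obtain ⟨u, _, rfl⟩ := this
      exact hx u.2
  · -- the Wᶜ side
    refine ⟨G.acyclic_induce Wᶜ hacyc, ?_, ?_⟩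
    · intro v
      have hdiv := G.divOf_induce Wᶜ φ v
      have hK := G.K_induce Wᶜ v
      rw [G.degCross_compl W v.1] at hK
      have hv : v.1 ∉ W := Finset.mem_compl.1 v.2
      have hdc : (G.degCross W v.1 : ℤ) =
          ((Finset.univ.filter (fun e => G.src e = v.1 ∧ G.crossing W e)).card : ℤ) +
          ((Finset.univ.filter (fun e => G.tgt e = v.1 ∧ G.crossing W e)).card : ℤ) := by
        rw [WGraph.degCross]; push_cast; ring
      have hc1 : (∑ e : G.E, if G.tgt e = v.1 ∧ ¬(G.src e ∈ Wᶜ ∧ G.tgt e ∈ Wᶜ)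
            then φ e else 0) =
          -((Finset.univ.filter (fun e => G.tgt e = v.1 ∧ G.crossing W e)).card : ℤ) := by
        rw [Finset.card_filter]
        push_cast
        rw [← Finset.sum_neg_distrib]
        apply Finset.sum_congr rfl
        intro e _
        by_cases ht : G.tgt e = v.1
        · have htW : G.tgt e ∉ W := by rw [ht]; exact hv
          by_cases hs : G.src e ∈ W
          · have hcr : G.crossing W e := by simp [WGraph.crossing, hs, htW]
            have hval := hphi e hcr
            rw [if_neg htW] at hval
            have hnb : ¬(G.src e ∈ Wᶜ ∧ G.tgt e ∈ Wᶜ) :=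
              fun hh => (Finset.mem_compl.1 hh.1) hs
            rw [if_pos ⟨ht, hnb⟩, if_pos ⟨ht, hcr⟩, hval]
          · have h1 : ¬(G.tgt e = v.1 ∧ ¬(G.src e ∈ Wᶜ ∧ G.tgt e ∈ Wᶜ)) :=
              fun hh => hh.2 ⟨Finset.mem_compl.2 hs, Finset.mem_compl.2 htW⟩
            have h2 : ¬(G.tgt e = v.1 ∧ G.crossing W e) :=
              fun hh => hh.2 (by simp [hs, htW] : (G.src _ ∈ W) = (G.tgt _ ∈ W))
            rw [if_neg h1, if_neg h2, neg_zero]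
        · have h1 : ¬(G.tgt e = v.1 ∧ ¬(G.src e ∈ Wᶜ ∧ G.tgt e ∈ Wᶜ)) := fun hh => ht hh.1
          have h2 : ¬(G.tgt e = v.1 ∧ G.crossing W e) := fun hh => ht hh.1
          rw [if_neg h1, if_neg h2, neg_zero]
      have hc2 : (∑ e : G.E, if G.src e = v.1 ∧ ¬(G.src e ∈ Wᶜ ∧ G.tgt e ∈ Wᶜ)
            then φ e else 0) =
          ((Finset.univ.filter (fun e => G.src e = v.1 ∧ G.crossing W e)).card : ℤ) := by
        rw [Finset.card_filter]
        push_cast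
        apply Finset.sum_congr rfl
        intro e _
        by_cases hs : G.src e = v.1
        · have hsW : G.src e ∉ W := by rw [hs]; exact hv
          by_cases ht : G.tgt e ∈ W
          · have hcr : G.crossing W e := by simp [WGraph.crossing, hsW, ht]
            have hval := hphi e hcr
            rw [if_pos ht] at hval
            have hnb : ¬(G.src e ∈ Wᶜ ∧ G.tgt e ∈ Wᶜ) :=
              fun hh => (Finset.mem_compl.1 hh.2) ht
            rw [if_pos ⟨hs, hnb⟩, if_pos ⟨hs, hcr⟩, hval]
          · have h1 : ¬(G.src e = v.1 ∧ ¬(G.src e ∈ Wᶜ ∧ G.tgt e ∈ Wᶜ)) :=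
              fun hh => hh.2 ⟨Finset.mem_compl.2 hsW, Finset.mem_compl.2 ht⟩
            have h2 : ¬(G.src e = v.1 ∧ G.crossing W e) :=
              fun hh => hh.2 (by simp [hsW, ht] : (G.src _ ∈ W) = (G.tgt _ ∈ W))
            rw [if_neg h1, if_neg h2]
        · have h1 : ¬(G.src e = v.1 ∧ ¬(G.src e ∈ Wᶜ ∧ G.tgt e ∈ Wᶜ)) := fun hh => hs hh.1
          have h2 : ¬(G.src e = v.1 ∧ G.crossing W e) := fun hh => hs hh.1
          rw [if_neg h1, if_neg h2]
      have h0 := heq v.1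
      rw [hdiv, hK, hc1, hc2]
      omega
    · intro U hU
      have hpol : (fun v : (G.induce Wᶜ).V =>
            G.canPol v.1 - (G.degCross W v.1 : ℚ) / 2) =
          (fun v : (G.induce Wᶜ).V =>
            G.canPol v.1 - (G.degCross Wᶜ v.1 : ℚ) / 2) := by
        funext v
        rw [G.degCross_compl W v.1]
      have hdivf : (fun v : (G.induce Wᶜ).V => D v.1 - (G.degCross W v.1 : ℤ)) =
          (fun v : (G.induce Wᶜ).V =>
            (fun x => D x - (G.degCross W x : ℤ)) v.1) := rfl
      rw [hpol, hdivf, G.beta_induce Wᶜ G.canPol (fun x => D x - (G.degCross W x : ℤ)) U]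
      set U' := U.image Subtype.val with hU'
      have hsub : ∀ x ∈ U', x ∉ W := by
        intro x hx
        erw [hU', Finset.mem_image] at hx
        obtain ⟨u, _, rfl⟩ := hx
        exact Finset.mem_compl.1 u.2
      rw [show (fun x => D x - (G.degCross W x : ℤ)) =
          (fun x => D x - (fun y => (G.degCross W y : ℤ)) x) from rfl]
      rw [G.beta_shift G.canPol D (fun y => (G.degCross W y : ℤ)) U']
      have hBU := G.beta_union G.canPol D U' W hsub
      rw [hbeta] at hBU
      have hne : U' ∪ W ≠ Finset.univ := by
        intro hUuniv
        have hUne : ∃ u : (G.induce Wᶜ).V, u ∉ U := by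
          by_contra h
          push_neg at h
          exact hU (Finset.eq_univ_of_forall h)
        obtain ⟨u, hu⟩ := hUne
        have h1 : u.1 ∈ U' ∪ W := hUuniv ▸ Finset.mem_univ _
        rcases Finset.mem_union.1 h1 with h | h
        · erw [hU', Finset.mem_image] at h
          obtain ⟨u2, hu2, hval⟩ := h
          rw [show u = u2 from Subtype.ext hval.symm] at hu
          exact hu hu2
        · exact Finset.mem_compl.1 u.2 h
      have hge := hss (U' ∪ W) hne
      have : ∑ v ∈ U', ((fun y => (G.degCross W y : ℤ)) v : ℚ) =
          ∑ v ∈ U', (G.degCross W v : ℚ) := by push_cast; rfl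
      rw [this]
      linarith [hBU, hge]
end
end

section
/- Let (Γ, E, D) be a polystable root-graph (canonical polarization of degree g-1). Then the linear map δ_E: ℝ^{E(Γ)} → ℝ^{E(Γ^E)} given by (x_e) ↦ (x_{e'}) with x_{e'} = x_e whenever e' lies over e, composed with the quotient map T_E: ℝ^{E(Γ^E)} → ℝ^{E(Γ^E)}/L_E, gives an isomorphism from the cone ℝ^{E(Γ)}_{≥0} onto the cone κ_{(Γ,E,D)} = T_E(λ_{(Γ,E,D)}), where λ_{(Γ,E,D)} = ℝ^{E(Γ^E)}_{≥0} ∩ Λ_{(Γ,E,D)} and Λ_{(Γ,E,D)} is the linear subspace cut out by the equations Σ_{e∈γ} φ_{(E,D)}(e) x_e = 0 over all oriented cycles γ of Γ^E. -/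
/-! A common framework for weighted multigraphs, divisors, flows,
subdivisions, pseudo-divisors and specializations, following
"The moduli space of quasistable spin curves". -/

noncomputable section

/-- A finite weighted multigraph (with a reference orientation of each edge). -/
structure MGraph where
  V : Type
  E : Type
  [fintV : Fintype V]
  [decV : DecidableEq V]
  [fintE : Fintype E]
  [decE : DecidableEq E]
  src : E → V
  tgt : E → V
  w : V → ℕ

namespace MGraph

attribute [instance] MGraph.fintV MGraph.decV MGraph.fintE MGraph.decE

attribute [local instance] Classical.propDecidable

variable (G : MGraph)

/-- Degree of a vertex (loops count twice). -/
def deg (v : G.V) : ℕ :=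
  (Finset.univ.filter (fun e => G.src e = v)).card +
    (Finset.univ.filter (fun e => G.tgt e = v)).card

/-- Degree of a vertex in the edge set `A` (loops count twice). -/
def degIn (A : Finset G.E) (v : G.V) : ℕ :=
  (A.filter (fun e => G.src e = v)).card + (A.filter (fun e => G.tgt e = v)).card

/-- Canonical divisor: `K(v) = 2 w(v) - 2 + deg(v)`. -/
def K (v : G.V) : ℤ := 2 * (G.w v : ℤ) - 2 + (G.deg v : ℤ)

/-- Canonical polarization of degree `g - 1`. -/
def canPol (v : G.V) : ℚ := (G.K v : ℚ) / 2

/-- Oriented edges: `(e, true)` is `src → tgt`, `(e, false)` is the reverse. -/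
abbrev OEdge := G.E × Bool

def osrc (oe : G.OEdge) : G.V := if oe.2 then G.src oe.1 else G.tgt oe.1

def otgt (oe : G.OEdge) : G.V := if oe.2 then G.tgt oe.1 else G.src oe.1

/-- A flow is recorded by its values along the reference orientation;
`flowVal` gives its value on an oriented edge. -/
def flowVal (φ : G.E → ℤ) (oe : G.OEdge) : ℤ := if oe.2 then φ oe.1 else -φ oe.1

/-- The divisor of a flow: `Div(φ)(v) = ∑_{t(e) = v} φ(e)` over oriented edges. -/
def divOf (φ : G.E → ℤ) (v : G.V) : ℤ :=
  (∑ e : G.E, if G.tgt e = v then φ e else 0) -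
    ∑ e : G.E, if G.src e = v then φ e else 0

/-- `e` has exactly one endpoint in `W`. -/
def crossing (W : Finset G.V) (e : G.E) : Prop := (G.src e ∈ W) ≠ (G.tgt e ∈ W)

/-- Number of edges between `W` and its complement. -/
def delta (W : Finset G.V) : ℕ := (Finset.univ.filter (fun e => G.crossing W e)).card

/-- `β_D(W) = deg(D|_W) - μ(W) + δ_W / 2`. -/
def beta (μ : G.V → ℚ) (D : G.V → ℤ) (W : Finset G.V) : ℚ :=
  (∑ v ∈ W, (D v : ℚ)) - (∑ v ∈ W, μ v) + (G.delta W : ℚ) / 2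

def Semistable (μ : G.V → ℚ) (D : G.V → ℤ) : Prop :=
  ∀ W : Finset G.V, W ≠ Finset.univ → 0 ≤ G.beta μ D W

def Stable (μ : G.V → ℚ) (D : G.V → ℤ) : Prop :=
  ∀ W : Finset G.V, W ≠ Finset.univ → W.Nonempty → 0 < G.beta μ D W

def Quasistable (μ : G.V → ℚ) (v₀ : G.V) (D : G.V → ℤ) : Prop :=
  ∀ W : Finset G.V, W ≠ Finset.univ →
    (0 ≤ G.beta μ D W ∧ (v₀ ∈ W → 0 < G.beta μ D W))

/-- An oriented cycle: a nonempty cyclically closed chain of oriented edges,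
with pairwise distinct underlying edges and pairwise distinct vertices. -/
def IsOrientedCycle (c : List G.OEdge) : Prop :=
  c ≠ [] ∧ (c.map Prod.fst).Nodup ∧ (c.map G.osrc).Nodup ∧
    ∀ i : Fin c.length,
      G.otgt (c.get i) = G.osrc (c.get ⟨((i : ℕ) + 1) % c.length, Nat.mod_lt _ i.pos⟩)

/-- A flow is acyclic if there is no oriented cycle on which it is
nonnegative and somewhere positive. -/
def Acyclic (φ : G.E → ℤ) : Prop :=
  ¬∃ c : List G.OEdge, G.IsOrientedCycle c ∧ (∀ oe ∈ c, 0 ≤ G.flowVal φ oe) ∧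
      ∃ oe ∈ c, 0 < G.flowVal φ oe

/-- Adjacency through an edge of `A`. -/
def adjVia (A : Finset G.E) (a b : G.V) : Prop :=
  ∃ e ∈ A, (G.src e = a ∧ G.tgt e = b) ∨ (G.src e = b ∧ G.tgt e = a)

/-- Reachability using only edges of `A`. -/
def ReachVia (A : Finset G.E) : G.V → G.V → Prop := Relation.ReflTransGen (G.adjVia A)

def Connected : Prop := Nonempty G.V ∧ ∀ u v : G.V, G.ReachVia Finset.univ u v

/-- A cyclic subgraph: a set of edges in which every vertex has even degree. -/
def IsCyclicSubgraph (P : Finset G.E) : Prop := ∀ v : G.V, Even (G.degIn P v)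

/-- The characteristic flow of a vertex. -/
def charFlow (v₀ : G.V) (e : G.E) : ℤ :=
  if G.src e = v₀ ∧ G.tgt e ≠ v₀ then 1
  else if G.tgt e = v₀ ∧ G.src e ≠ v₀ then -1 else 0

/-- `Div(v₀)`, the principal divisor attached to a vertex. -/
def DivV (v₀ : G.V) : G.V → ℤ := G.divOf (G.charFlow v₀)

/-- Principal divisors are integer combinations of the `Div(v)`. -/
def Principal (D : G.V → ℤ) : Prop :=
  ∃ a : G.V → ℤ, ∀ v, D v = ∑ u : G.V, a u * G.DivV u v

/-- Number of connected components of the subgraph with all vertices and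
edge set `A`. -/
def numComponents (A : Finset G.E) : ℕ :=
  (Finset.univ.image (fun v => Finset.univ.filter (fun u => G.ReachVia A v u))).card

/-- The subdivision `Γ^S`: one exceptional vertex inserted in each edge of `S`. -/
def subdiv (S : Finset G.E) : MGraph where
  V := G.V ⊕ {e // e ∈ S}
  E := {e // e ∉ S} ⊕ {e // e ∈ S} × Bool
  src := fun x =>
    match x with
    | .inl e => .inl (G.src e.1)
    | .inr (e, b) => if b then .inr e else .inl (G.src e.1)
  tgt := fun x =>
    match x with
    | .inl e => .inl (G.tgt e.1)
    | .inr (e, b) => if b then .inl (G.tgt e.1) else .inr e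
  w := fun v =>
    match v with
    | .inl v => G.w v
    | .inr _ => 0

/-- A pseudo-divisor: value `-1` on every exceptional vertex. -/
def IsPseudoDivisor (S : Finset G.E) (D : (G.subdiv S).V → ℤ) : Prop :=
  ∀ x : {e // e ∈ S}, D (Sum.inr x) = -1

/-- A pseudo-root: `2 D + Div(φ) = K_{Γ^S}` for some acyclic flow `φ` on `Γ^S`. -/
def IsPseudoRoot (S : Finset G.E) (D : (G.subdiv S).V → ℤ) : Prop :=
  G.IsPseudoDivisor S D ∧
    ∃ φ : (G.subdiv S).E → ℤ, (G.subdiv S).Acyclic φ ∧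
      ∀ v, 2 * D v + (G.subdiv S).divOf φ v = (G.subdiv S).K v

/-- Semistability of a pseudo-divisor: semistability on the subdivision with
respect to the (extended) canonical polarization. -/
def IsSemistablePR (S : Finset G.E) (D : (G.subdiv S).V → ℤ) : Prop :=
  (G.subdiv S).Semistable (G.subdiv S).canPol D

/-- `β_{E,D}` for pseudo-divisors, on subsets of the original vertices. -/
def betaPoly (S : Finset G.E) (D : (G.subdiv S).V → ℤ) (W : Finset G.V) : ℚ :=
  (∑ v ∈ W, (D (Sum.inl v) : ℚ)) -
    (∑ v ∈ W, (G.canPol v + (G.degIn S v : ℚ) / 2)) +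
    ((Finset.univ.filter (fun e => e ∉ S ∧ G.crossing W e)).card : ℚ) / 2

/-- Polystability of a pseudo-divisor. -/
def IsPolystable (S : Finset G.E) (D : (G.subdiv S).V → ℤ) : Prop :=
  ∀ W : Finset G.V,
    0 ≤ G.betaPoly S D W ∧ ((∃ e, e ∉ S ∧ G.crossing W e) → 0 < G.betaPoly S D W)

/-- The divisor `D_P` attached to a cyclic subgraph `P`, on `Γ^{E_P}` with
`E_P = Pᶜ`. -/
def DP (P : Finset G.E) : (G.subdiv Pᶜ).V → ℤ := fun x =>
  match x with
  | .inl v => (G.deg v : ℤ) - (G.degIn P v : ℤ) / 2 - 1 + (G.w v : ℤ)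
  | .inr _ => -1

/-- The data of a semistable root-graph together with its acyclic flow. -/
def IsSemistableRootTriple (S : Finset G.E) (D : (G.subdiv S).V → ℤ)
    (φ : (G.subdiv S).E → ℤ) : Prop :=
  G.IsPseudoDivisor S D ∧ G.IsSemistablePR S D ∧ (G.subdiv S).Acyclic φ ∧
    ∀ v, 2 * D v + (G.subdiv S).divOf φ v = (G.subdiv S).K v

/-- The induced subgraph on a vertex set `W`. -/
def induce (W : Finset G.V) : MGraph where
  V := {v // v ∈ W}
  E := {e // G.src e ∈ W ∧ G.tgt e ∈ W}
  src := fun e => ⟨G.src e.1, e.2.1⟩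
  tgt := fun e => ⟨G.tgt e.1, e.2.2⟩
  w := fun v => G.w v.1

/-- Number of edges between `W` and `Wᶜ` incident to `v`. -/
def degCross (W : Finset G.V) (v : G.V) : ℕ :=
  (Finset.univ.filter (fun e => G.src e = v ∧ G.crossing W e)).card +
    (Finset.univ.filter (fun e => G.tgt e = v ∧ G.crossing W e)).card

/-- A specialization (iterated edge contraction) of weighted graphs. -/
structure Spec (G G' : MGraph) where
  vmap : G.V → G'.V
  emap : G'.E → G.E
  emap_inj : Function.Injective emap
  vmap_surj : Function.Surjective vmap
  src_comm : ∀ e', vmap (G.src (emap e')) = G'.src e'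
  tgt_comm : ∀ e', vmap (G.tgt (emap e')) = G'.tgt e'
  contract_eq : ∀ e : G.E, e ∉ Finset.univ.image emap → vmap (G.src e) = vmap (G.tgt e)
  fiber_conn : ∀ u v : G.V, vmap u = vmap v →
    Relation.ReflTransGen
      (fun a b => ∃ e, e ∉ Finset.univ.image emap ∧
        ((G.src e = a ∧ G.tgt e = b) ∨ (G.src e = b ∧ G.tgt e = a))) u v
  weight_eq : ∀ v' : G'.V,
    (G'.w v' : ℤ) =
      (∑ v ∈ Finset.univ.filter (fun v => vmap v = v'), (G.w v : ℤ)) +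
        ((Finset.univ.filter (fun e : G.E =>
            e ∉ Finset.univ.image emap ∧ vmap (G.src e) = v')).card : ℤ) -
        ((Finset.univ.filter (fun v : G.V => vmap v = v')).card : ℤ) + 1

/-- Pushforward of a divisor along a specialization. -/
def Spec.pushDiv {G G' : MGraph} (σ : Spec G G') (D : G.V → ℤ) : G'.V → ℤ :=
  fun v' => ∑ v ∈ Finset.univ.filter (fun v => σ.vmap v = v'), D v

/-- Pushforward of a polarization along a specialization. -/
def Spec.pushPol {G G' : MGraph} (σ : Spec G G') (μ : G.V → ℚ) : G'.V → ℚ :=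
  fun v' => ∑ v ∈ Finset.univ.filter (fun v => σ.vmap v = v'), μ v

/-- The induced map on vertices of subdivisions. -/
def Spec.subdivVmap {G G' : MGraph} (σ : Spec G G') (S : Finset G.E)
    (S' : Finset G'.E) : (G.subdiv S).V → (G'.subdiv S').V := fun x =>
  match x with
  | .inl v => .inl (σ.vmap v)
  | .inr e =>
    if h : ∃ e' : {e' // e' ∈ S'}, σ.emap e'.1 = e.1 then .inr h.choose
    else .inl (σ.vmap (G.src e.1))

/-- Pushforward of a pseudo-divisor (its divisor part) along a specialization. -/
def Spec.pushSubdivDiv {G G' : MGraph} (σ : Spec G G') (S : Finset G.E)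
    (S' : Finset G'.E) (D : (G.subdiv S).V → ℤ) : (G'.subdiv S').V → ℤ := fun y =>
  ∑ x ∈ Finset.univ.filter (fun x => σ.subdivVmap S S' x = y), D x

/-- Extension by zero along the edge injection of a specialization. -/
def Spec.extendBy {G G' : MGraph} (σ : Spec G G') (x : G'.E → ℝ) : G.E → ℝ :=
  fun e => if h : ∃ e', σ.emap e' = e then x h.choose else 0

/-- Same-graph contraction of subdivisions (for `S ⊆ S'`): the vertex map.
`σb e` selects the endpoint to which the exceptional vertex of a contracted
edge `e ∈ S' \ S` is merged (`true` = target, `false` = source). -/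
def contrVmap (S S' : Finset G.E) (σb : G.E → Bool) :
    (G.subdiv S').V → (G.subdiv S).V := fun x =>
  match x with
  | .inl v => .inl v
  | .inr e =>
    if h : e.1 ∈ S then .inr ⟨e.1, h⟩
    else .inl (if σb e.1 then G.tgt e.1 else G.src e.1)

/-- Same-graph contraction of subdivisions: the edge injection. -/
def contrEmap (S S' : Finset G.E) (hSS : S ⊆ S') (σb : G.E → Bool) :
    (G.subdiv S).E → (G.subdiv S').E := fun x =>
  match x with
  | .inl e =>
    if h : e.1 ∈ S' then .inr (⟨e.1, h⟩, !σb e.1) else .inl ⟨e.1, h⟩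
  | .inr eb => .inr (⟨eb.1.1, hSS eb.1.2⟩, eb.2)

/-- Specialization of pseudo-divisors over a fixed graph. -/
def PDSpec (S' : Finset G.E) (D' : (G.subdiv S').V → ℤ) (S : Finset G.E)
    (D : (G.subdiv S).V → ℤ) : Prop :=
  S ⊆ S' ∧ ∃ σb : G.E → Bool,
    ∀ v, D v = ∑ x ∈ Finset.univ.filter (fun x => G.contrVmap S S' σb x = v), D' x

/-- Specialization of semistable root-graphs over a fixed graph: a
specialization of pseudo-divisors pushing the acyclic flow forward. -/
def RootSpec (S' : Finset G.E) (D' : (G.subdiv S').V → ℤ) (S : Finset G.E)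
    (D : (G.subdiv S).V → ℤ) : Prop :=
  ∃ hSS : S ⊆ S', ∃ σb : G.E → Bool,
    (∀ v, D v = ∑ x ∈ Finset.univ.filter (fun x => G.contrVmap S S' σb x = v), D' x) ∧
    ∀ φ' φ : _, (G.subdiv S').Acyclic φ' →
      (∀ v, 2 * D' v + (G.subdiv S').divOf φ' v = (G.subdiv S').K v) →
      (G.subdiv S).Acyclic φ →
      (∀ v, 2 * D v + (G.subdiv S).divOf φ v = (G.subdiv S).K v) →
      ∀ x, φ x = φ' (G.contrEmap S S' hSS σb x)

/-- Underlying edge of `Γ` of an edge of `Γ^S`. -/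
def underE (S : Finset G.E) : (G.subdiv S).E → G.E := fun x =>
  match x with
  | .inl e => e.1
  | .inr eb => eb.1.1

/-- A specialization of triples `(Γ, E, D) ≥ (Γ', E', D')`. -/
structure TripleSpec (G : MGraph) (S : Finset G.E) (D : (G.subdiv S).V → ℤ)
    (G' : MGraph) (S' : Finset G'.E) (D' : (G'.subdiv S').V → ℤ) where
  base : Spec G G'
  sub : Spec (G.subdiv S) (G'.subdiv S')
  vcomm : ∀ v : G.V, sub.vmap (Sum.inl v) = Sum.inl (base.vmap v)
  ecomm : ∀ x : (G'.subdiv S').E, G.underE S (sub.emap x) = base.emap (G'.underE S' x)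
  edges_sub : ∀ e' ∈ S', base.emap e' ∈ S
  push_eq : ∀ y, D' y = ∑ x ∈ Finset.univ.filter (fun x => sub.vmap x = y), D x

/-- A triple specialization is a specialization of root-graphs when it pushes
the (unique) acyclic flows forward. -/
def TripleSpec.IsRootSpec {G : MGraph} {S : Finset G.E} {D : (G.subdiv S).V → ℤ}
    {G' : MGraph} {S' : Finset G'.E} {D' : (G'.subdiv S').V → ℤ}
    (T : TripleSpec G S D G' S' D') : Prop :=
  ∀ φ φ', (G.subdiv S).Acyclic φ →
    (∀ v, 2 * D v + (G.subdiv S).divOf φ v = (G.subdiv S).K v) →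
    (G'.subdiv S').Acyclic φ' →
    (∀ v, 2 * D' v + (G'.subdiv S').divOf φ' v = (G'.subdiv S').K v) →
    ∀ x, φ' x = φ (T.sub.emap x)

/-- The cone `λ` attached to a flow: nonnegative orthant cut by the cycle
equations. -/
def lambdaSet (φ : G.E → ℤ) : Set (G.E → ℝ) :=
  {x | (∀ e, 0 ≤ x e) ∧ ∀ c : List G.OEdge, G.IsOrientedCycle c →
      ((c.map (fun oe => (G.flowVal φ oe : ℝ) * x oe.1)).sum) = 0}

/-- Its relative interior (intersection with the positive orthant). -/
def lambdaInt (φ : G.E → ℤ) : Set (G.E → ℝ) :=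
  {x | (∀ e, 0 < x e) ∧ ∀ c : List G.OEdge, G.IsOrientedCycle c →
      ((c.map (fun oe => (G.flowVal φ oe : ℝ) * x oe.1)).sum) = 0}

/-- Faces of a cone (supporting-hyperplane definition). -/
def IsFaceOf (F C : Set (G.E → ℝ)) : Prop :=
  F = C ∨ ∃ l : (G.E → ℝ) →ₗ[ℝ] ℝ, (∀ x ∈ C, 0 ≤ l x) ∧ F = C ∩ {x | l x = 0}

/-- Facets: faces of codimension one. -/
def IsFacetOf (F C : Set (G.E → ℝ)) : Prop :=
  G.IsFaceOf F C ∧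
    Module.finrank ℝ (Submodule.span ℝ F) + 1 = Module.finrank ℝ (Submodule.span ℝ C)

/-- The vector `u_V` spanning the subspace `L_E`. -/
def uVec (S : Finset G.E) (W : Finset G.V) : (G.subdiv S).E → ℝ := fun x =>
  match x with
  | .inl _ => 0
  | .inr eb =>
    if G.crossing W eb.1.1 then
      (if (if eb.2 then G.tgt eb.1.1 else G.src eb.1.1) ∈ W then 1 else -1)
    else 0

/-- The subspace `L_E ⊆ ℝ^{E(Γ^S)}`. -/
def LSub (S : Finset G.E) : Submodule ℝ ((G.subdiv S).E → ℝ) :=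
  Submodule.span ℝ {u | ∃ W : Finset G.V, (∀ e, G.crossing W e → e ∈ S) ∧ u = G.uVec S W}

/-- The diagonal map `δ_E : ℝ^{E(Γ)} → ℝ^{E(Γ^S)}`. -/
def deltaMap (S : Finset G.E) (x : G.E → ℝ) : (G.subdiv S).E → ℝ := fun e' =>
  match e' with
  | .inl e => x e.1
  | .inr eb => x eb.1.1

/-- One step of a `φ`-path avoiding the edges of `A`. -/
def phiStep (φ : G.E → ℤ) (A : Finset G.E) (a b : G.V) : Prop :=
  ∃ oe : G.OEdge, oe.1 ∉ A ∧ 0 ≤ G.flowVal φ oe ∧ G.osrc oe = a ∧ G.otgt oe = b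

/-- Reachability by `φ`-paths avoiding the edges of `A`. -/
def PhiReach (φ : G.E → ℤ) (A : Finset G.E) : G.V → G.V → Prop :=
  Relation.ReflTransGen (G.phiStep φ A)

/-- The refinement of `Γ` inserting `m e` vertices in the interior of each
edge `e`. -/
def refine (m : G.E → ℕ) : MGraph where
  V := G.V ⊕ (Σ e : G.E, Fin (m e))
  E := Σ e : G.E, Fin (m e + 1)
  src := fun x =>
    if h : (x.2 : ℕ) = 0 then .inl (G.src x.1)
    else .inr ⟨x.1, ⟨(x.2 : ℕ) - 1, by have := x.2.isLt; omega⟩⟩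
  tgt := fun x =>
    if h : (x.2 : ℕ) = m x.1 then .inl (G.tgt x.1)
    else .inr ⟨x.1, ⟨(x.2 : ℕ), by have := x.2.isLt; omega⟩⟩
  w := fun v =>
    match v with
    | .inl v => G.w v
    | .inr _ => 0

end MGraph


namespace MGraph

attribute [local instance] Classical.propDecidable

variable {G : MGraph}

/-- Step along an allowed oriented edge. -/
def QStep (G : MGraph) (Q : G.OEdge → Prop) (a b : G.V) : Prop :=
  ∃ oe : G.OEdge, Q oe ∧ G.osrc oe = a ∧ G.otgt oe = b

/-- Walks along allowed oriented edges. -/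
def QWalk (G : MGraph) (Q : G.OEdge → Prop) : G.V → G.V → Prop :=
  Relation.ReflTransGen (G.QStep Q)

lemma osrc_flip (oe : G.OEdge) : G.osrc (oe.1, !oe.2) = G.otgt oe := by
  obtain ⟨e, b⟩ := oe; cases b <;> simp [osrc, otgt]

lemma otgt_flip (oe : G.OEdge) : G.otgt (oe.1, !oe.2) = G.osrc oe := by
  obtain ⟨e, b⟩ := oe; cases b <;> simp [osrc, otgt]

lemma flowVal_flip (φ : G.E → ℤ) (oe : G.OEdge) :
    G.flowVal φ (oe.1, !oe.2) = - G.flowVal φ oe := by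
  obtain ⟨e, b⟩ := oe; cases b <;> simp [flowVal]

lemma endpoints_pair {oe oe' : G.OEdge} (h : oe'.1 = oe.1) :
    (G.osrc oe' = G.osrc oe ∧ G.otgt oe' = G.otgt oe) ∨
    (G.osrc oe' = G.otgt oe ∧ G.otgt oe' = G.osrc oe) := by
  obtain ⟨e, b⟩ := oe; obtain ⟨e', b'⟩ := oe'
  simp only at h; subst h
  cases b <;> cases b' <;> simp [osrc, otgt]

/-- A simple path from `u` to `v` along allowed oriented edges. -/
structure SPath (G : MGraph) (Q : G.OEdge → Prop) (u v : G.V) (p : List G.OEdge) : Prop where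
  mem : ∀ oe ∈ p, Q oe
  chain : p.map G.osrc = (u :: p.map G.otgt).dropLast
  lastv : (u :: p.map G.otgt).getLast (List.cons_ne_nil _ _) = v
  nodupV : (u :: p.map G.otgt).Nodup
  nodupE : (p.map Prod.fst).Nodup

lemma SPath.nil {Q : G.OEdge → Prop} (u : G.V) : G.SPath Q u u [] :=
  ⟨by simp, by simp, by simp, by simp, by simp⟩

lemma SPath.head_eq {Q : G.OEdge → Prop} {u v : G.V} {oe : G.OEdge} {p : List G.OEdge}
    (h : G.SPath Q u v (oe :: p)) : G.osrc oe = u := by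
  have hc := h.chain
  simp only [List.map_cons, List.dropLast_cons₂] at hc
  exact (List.cons_eq_cons.mp hc).1

lemma SPath.tail {Q : G.OEdge → Prop} {u v : G.V} {oe : G.OEdge} {p : List G.OEdge}
    (h : G.SPath Q u v (oe :: p)) : G.SPath Q (G.otgt oe) v p := by
  have hc := h.chain
  simp only [List.map_cons, List.dropLast_cons₂] at hc
  refine ⟨fun x hx => h.mem x (List.mem_cons_of_mem _ hx), (List.cons_eq_cons.mp hc).2, ?_, ?_, ?_⟩
  · have := h.lastv
    rwa [List.map_cons, List.getLast_cons (List.cons_ne_nil _ _)] at this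
  · have := h.nodupV
    simp only [List.map_cons] at this
    exact this.of_cons
  · exact (List.nodup_cons.mp h.nodupE).2

lemma SPath.osrc_mem {Q : G.OEdge → Prop} {u v : G.V} {p : List G.OEdge}
    (h : G.SPath Q u v p) {oe : G.OEdge} (hin : oe ∈ p) :
    G.osrc oe ∈ u :: p.map G.otgt := by
  have h1 : G.osrc oe ∈ p.map G.osrc := List.mem_map_of_mem hin
  rw [h.chain] at h1
  exact (List.dropLast_sublist _).subset h1

lemma SPath.cons {Q : G.OEdge → Prop} {u u' v : G.V} {oe : G.OEdge} {p : List G.OEdge}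
    (h : G.SPath Q u' v p) (hQ : Q oe) (hs : G.osrc oe = u) (ht : G.otgt oe = u')
    (hu : u ∉ u' :: p.map G.otgt) : G.SPath Q u v (oe :: p) := by
  refine ⟨?_, ?_, ?_, ?_, ?_⟩
  · intro x hx
    rcases List.mem_cons.mp hx with rfl | hx
    · exact hQ
    · exact h.mem x hx
  · simp only [List.map_cons, List.dropLast_cons₂, ht, hs, List.cons_eq_cons]
    exact ⟨trivial, h.chain⟩
  · rw [List.map_cons, List.getLast_cons (List.cons_ne_nil _ _), ht]
    exact h.lastv
  · rw [List.map_cons, ht]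
    exact List.nodup_cons.mpr ⟨hu, h.nodupV⟩
  · rw [List.map_cons, List.nodup_cons]
    refine ⟨?_, h.nodupE⟩
    intro hmem
    obtain ⟨oe', hoe', heq⟩ := List.mem_map.mp hmem
    rcases endpoints_pair heq with ⟨h1, _⟩ | ⟨h1, h2⟩
    · exact hu (by rw [hs] at h1; rw [← h1]; exact h.osrc_mem hoe')
    · rw [hs] at h2
      exact hu (List.mem_cons_of_mem _ (by rw [← h2]; exact List.mem_map_of_mem hoe'))

lemma SPath.truncate {Q : G.OEdge → Prop} {v w : G.V} :
    ∀ (p : List G.OEdge) (u : G.V), G.SPath Q u v p → w ∈ u :: p.map G.otgt →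
      ∃ q, G.SPath Q w v q ∧ q.Sublist p := by
  intro p
  induction p with
  | nil =>
    intro u h hw
    simp only [List.map_nil, List.mem_singleton] at hw
    subst hw
    obtain rfl : w = v := by simpa using h.lastv
    exact ⟨[], SPath.nil _, List.Sublist.refl _⟩
  | cons oe p ih =>
    intro u h hw
    rcases List.mem_cons.mp hw with rfl | hw'
    · exact ⟨oe :: p, h, List.Sublist.refl _⟩
    · rw [List.map_cons] at hw'
      obtain ⟨q, hq, hsub⟩ := ih (G.otgt oe) h.tail hw'
      exact ⟨q, hq, hsub.trans (List.sublist_cons_self _ _)⟩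

lemma QWalk.exists_spath {Q : G.OEdge → Prop} {u v : G.V} (h : G.QWalk Q u v) :
    ∃ p, G.SPath Q u v p := by
  induction h using Relation.ReflTransGen.head_induction_on with
  | refl => exact ⟨[], SPath.nil v⟩
  | head hstep _ ih =>
    obtain ⟨p, hp⟩ := ih
    obtain ⟨oe, hQ, hs, ht⟩ := hstep
    subst hs; subst ht
    by_cases hmem : G.osrc oe ∈ G.otgt oe :: p.map G.otgt
    · obtain ⟨q, hq, _⟩ := SPath.truncate p (G.otgt oe) hp hmem
      exact ⟨q, hq⟩
    · exact ⟨oe :: p, SPath.cons hp hQ rfl rfl hmem⟩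

lemma SPath.telescope {Q : G.OEdge → Prop} {v : G.V} (f : G.OEdge → ℝ) (g : G.V → ℝ) :
    ∀ (p : List G.OEdge) (u : G.V), G.SPath Q u v p →
      (∀ oe ∈ p, f oe = g (G.otgt oe) - g (G.osrc oe)) → (p.map f).sum = g v - g u := by
  intro p
  induction p with
  | nil =>
    intro u h _
    have : u = v := by simpa using h.lastv
    subst this; simp
  | cons oe p ih =>
    intro u h hf
    have h1 := ih (G.otgt oe) h.tail (fun x hx => hf x (List.mem_cons_of_mem _ hx))
    rw [List.map_cons, List.sum_cons, h1, hf oe List.mem_cons_self, h.head_eq]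
    ring

lemma isOrientedCycle_of {c : List G.OEdge} (hne : c ≠ [])
    (h1 : (c.map Prod.fst).Nodup) (h2 : (c.map G.osrc).Nodup)
    (h3 : c.map G.otgt = (c.map G.osrc).rotate 1) : G.IsOrientedCycle c := by
  refine ⟨hne, h1, h2, fun i => ?_⟩
  have hi : (i : ℕ) < (c.map G.otgt).length := by simpa using i.2
  have hrotlen : (i : ℕ) < ((c.map G.osrc).rotate 1).length := by simpa using i.2
  have e1 : G.otgt (c.get i) = (c.map G.otgt)[(i : ℕ)] := by simp
  rw [e1, List.getElem_of_eq h3 hi, List.getElem_rotate]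
  simp [List.getElem_map]

lemma cycle_rotate_sum (f : G.OEdge → ℝ) (g : G.V → ℝ)
    (hf : ∀ oe, f oe = g (G.otgt oe) - g (G.osrc oe))
    {c : List G.OEdge} (hc : G.IsOrientedCycle c) : (c.map f).sum = 0 := by
  obtain ⟨hne, _, _, hchain⟩ := hc
  obtain ⟨m, hm⟩ : ∃ m, c.length = m + 1 := by
    cases c with
    | nil => exact absurd rfl hne
    | cons a l => exact ⟨l.length, rfl⟩
  have hrw : c.map f = List.ofFn (fun i : Fin c.length => f (c.get i)) := by
    conv_lhs => rw [← List.ofFn_get c]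
    rw [List.map_ofFn]; rfl
  rw [hrw, List.sum_ofFn]
  have key : ∀ i : Fin c.length, f (c.get i) =
      g (G.osrc (c.get ⟨((i : ℕ) + 1) % c.length, Nat.mod_lt _ i.pos⟩)) - g (G.osrc (c.get i)) := by
    intro i
    rw [hf, hchain i]
  calc ∑ i : Fin c.length, f (c.get i)
      = ∑ i : Fin c.length,
          (g (G.osrc (c.get ⟨((i : ℕ) + 1) % c.length, Nat.mod_lt _ i.pos⟩)) -
            g (G.osrc (c.get i))) := Finset.sum_congr rfl (fun i _ => key i)
    _ = 0 := by
        rw [Finset.sum_sub_distrib, sub_eq_zero]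
        have hmod : ∀ k : Fin c.length,
            ((k : ℕ) + 1) % c.length = if (k : ℕ) + 1 = c.length then 0 else (k : ℕ) + 1 := by
          intro k
          by_cases hk : (k : ℕ) + 1 = c.length
          · simp [hk, Nat.mod_self]
          · rw [if_neg hk]; exact Nat.mod_eq_of_lt (by have := k.2; omega)
        have hbij : Function.Bijective (fun i : Fin c.length =>
            (⟨((i : ℕ) + 1) % c.length, Nat.mod_lt _ i.pos⟩ : Fin c.length)) := by
          rw [Fintype.bijective_iff_injective_and_card]
          refine ⟨fun i j hij => ?_, rfl⟩
          have hval := congrArg Fin.val hij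
          simp only at hval
          rw [hmod i, hmod j] at hval
          have hi := i.2; have hj := j.2
          apply Fin.ext
          split at hval <;> split at hval <;> omega
        exact Fintype.sum_bijective _ hbij _ _ (fun x => rfl)


section Counting

variable {G : MGraph} {S : Finset G.E}

lemma cast_card_filter {α : Type} {M : Type} [AddCommMonoidWithOne M]
    (s : Finset α) (p : α → Prop) :
    ((s.filter p).card : M) = ∑ x ∈ s, if p x then (1 : M) else 0 := by
  rw [Finset.card_filter, Nat.cast_sum]
  exact Finset.sum_congr rfl fun x _ => by split <;> simp

/-- Master lemma: sums over vertices of the subdivision. -/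
lemma sum_subdivV_eq {M : Type} [AddCommMonoid M] (f : (G.subdiv S).V → M) (f₁ : G.E → M)
    (h₁ : ∀ (e : G.E) (h : e ∈ S), f (Sum.inr ⟨e, h⟩) = f₁ e) :
    ∑ v : (G.subdiv S).V, f v = ∑ v : G.V, f (Sum.inl v) + ∑ e ∈ S, f₁ e := by
  have huniv : (Finset.univ : Finset (G.subdiv S).V) =
      (Finset.univ : Finset (G.V ⊕ {e // e ∈ S})) := by
    congr 1 <;> exact Subsingleton.elim _ _
  calc ∑ v : (G.subdiv S).V, f v
      = ∑ v : G.V ⊕ {e // e ∈ S}, f v := Finset.sum_congr huniv (fun _ _ => rfl)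
    _ = ∑ v : G.V, f (Sum.inl v) + ∑ x : {e // e ∈ S}, f (Sum.inr x) :=
        Fintype.sum_sum_type f
    _ = ∑ v : G.V, f (Sum.inl v) + ∑ e ∈ S, f₁ e := by
        congr 1
        rw [Finset.sum_subtype S (fun x => Iff.rfl) f₁]
        apply Finset.sum_congr rfl
        intro x _
        obtain ⟨e, he⟩ := x
        exact h₁ e he

/-- Master lemma: sums over edges of the subdivision. -/
lemma sum_subdivE_eq {M : Type} [AddCommMonoid M] (f : (G.subdiv S).E → M)
    (f₀ f₁ f₂ : G.E → M)
    (h₀ : ∀ (e : G.E) (h : e ∉ S), f (Sum.inl ⟨e, h⟩) = f₀ e)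
    (h₁ : ∀ (e : G.E) (h : e ∈ S), f (Sum.inr (⟨e, h⟩, false)) = f₁ e)
    (h₂ : ∀ (e : G.E) (h : e ∈ S), f (Sum.inr (⟨e, h⟩, true)) = f₂ e) :
    ∑ x : (G.subdiv S).E, f x = ∑ e ∈ Sᶜ, f₀ e + ∑ e ∈ S, (f₁ e + f₂ e) := by
  have huniv : (Finset.univ : Finset (G.subdiv S).E) =
      (Finset.univ : Finset ({e // e ∉ S} ⊕ {e // e ∈ S} × Bool)) := by
    congr 1 <;> exact Subsingleton.elim _ _
  calc ∑ x : (G.subdiv S).E, f x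
      = ∑ x : {e // e ∉ S} ⊕ {e // e ∈ S} × Bool, f x := Finset.sum_congr huniv (fun _ _ => rfl)
    _ = ∑ x : {e // e ∉ S}, f (Sum.inl x) + ∑ x : {e // e ∈ S} × Bool, f (Sum.inr x) :=
        Fintype.sum_sum_type f
    _ = ∑ e ∈ Sᶜ, f₀ e + ∑ e ∈ S, (f₁ e + f₂ e) := by
        congr 1
        · rw [Finset.sum_subtype Sᶜ (fun x => Finset.mem_compl) f₀]
          apply Finset.sum_congr rfl
          intro x _
          obtain ⟨e, he⟩ := x
          exact h₀ e he
        · rw [Fintype.sum_prod_type]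
          rw [Finset.sum_subtype S (fun x => Iff.rfl) (fun e => f₁ e + f₂ e)]
          apply Finset.sum_congr rfl
          intro x _
          obtain ⟨e, he⟩ := x
          rw [Fintype.sum_bool, h₁ e he, h₂ e he, add_comm]

lemma subdiv_deg_inl (v : G.V) : (G.subdiv S).deg (Sum.inl v) = G.deg v := by
  unfold deg
  have hsrc : (Finset.univ.filter (fun x => (G.subdiv S).src x = Sum.inl v)).card =
      (Finset.univ.filter (fun e => G.src e = v)).card := by
    rw [Finset.card_filter, Finset.card_filter]
    rw [sum_subdivE_eq _ (fun e => if G.src e = v then 1 else 0)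
      (fun e => if G.src e = v then 1 else 0) (fun _ => 0)
      (fun e h => by simp [subdiv]) (fun e h => by simp [subdiv]) (fun e h => by simp [subdiv])]
    rw [← Finset.sum_compl_add_sum S (fun e => if G.src e = v then (1 : ℕ) else 0)]
    simp
  have htgt : (Finset.univ.filter (fun x => (G.subdiv S).tgt x = Sum.inl v)).card =
      (Finset.univ.filter (fun e => G.tgt e = v)).card := by
    rw [Finset.card_filter, Finset.card_filter]
    rw [sum_subdivE_eq _ (fun e => if G.tgt e = v then 1 else 0)
      (fun _ => 0) (fun e => if G.tgt e = v then 1 else 0)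
      (fun e h => by simp [subdiv]) (fun e h => by simp [subdiv]) (fun e h => by simp [subdiv])]
    rw [← Finset.sum_compl_add_sum S (fun e => if G.tgt e = v then (1 : ℕ) else 0)]
    simp
  convert congrArg₂ (· + ·) hsrc htgt

lemma subdiv_deg_inr (x : {e // e ∈ S}) : (G.subdiv S).deg (Sum.inr x) = 2 := by
  unfold deg
  have hsrc : (Finset.univ.filter (fun y => (G.subdiv S).src y = Sum.inr x)).card = 1 := by
    rw [Finset.card_filter]
    rw [sum_subdivE_eq _ (fun _ => 0) (fun _ => 0) (fun e => if e = x.1 then 1 else 0)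
      (fun e h => by simp [subdiv]) (fun e h => by simp [subdiv])
      (fun e h => by simp [subdiv, Subtype.ext_iff])]
    simp [Finset.sum_ite_eq' S x.1 (fun _ => (1 : ℕ)), x.2]
  have htgt : (Finset.univ.filter (fun y => (G.subdiv S).tgt y = Sum.inr x)).card = 1 := by
    rw [Finset.card_filter]
    rw [sum_subdivE_eq _ (fun _ => 0) (fun e => if e = x.1 then 1 else 0) (fun _ => 0)
      (fun e h => by simp [subdiv]) (fun e h => by simp [subdiv, Subtype.ext_iff])
      (fun e h => by simp [subdiv])]
    simp [Finset.sum_ite_eq' S x.1 (fun _ => (1 : ℕ)), x.2]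
  convert congrArg₂ (· + ·) hsrc htgt

lemma subdiv_canPol_inl (v : G.V) : (G.subdiv S).canPol (Sum.inl v) = G.canPol v := by
  unfold canPol K
  rw [subdiv_deg_inl]
  rfl

lemma subdiv_K_inr (x : {e // e ∈ S}) : (G.subdiv S).K (Sum.inr x) = 0 := by
  unfold K
  rw [subdiv_deg_inr]
  simp [subdiv]

lemma subdiv_canPol_inr (x : {e // e ∈ S}) : (G.subdiv S).canPol (Sum.inr x) = 0 := by
  unfold canPol
  rw [subdiv_K_inr]
  simp

lemma subdiv_divOf_inr (φ : (G.subdiv S).E → ℤ) (x : {e // e ∈ S}) :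
    (G.subdiv S).divOf φ (Sum.inr x) = φ (Sum.inr (x, false)) - φ (Sum.inr (x, true)) := by
  unfold divOf
  have h1 : ∑ e : (G.subdiv S).E, (if (G.subdiv S).tgt e = Sum.inr x then φ e else 0) =
      φ (Sum.inr (x, false)) := by
    rw [sum_subdivE_eq _ (fun _ => 0)
      (fun e => if e = x.1 then φ (Sum.inr (x, false)) else 0) (fun _ => 0)
      (fun e h => by simp [subdiv]) ?_ (fun e h => by simp [subdiv])]
    · simp [Finset.sum_ite_eq' S x.1, x.2]
    · intro e h
      by_cases hex : e = x.1
      · have hx : (⟨e, h⟩ : {e // e ∈ S}) = x := Subtype.ext hex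
        rw [hx]
        simp [subdiv, hex]
      · have hne : (⟨e, h⟩ : {e // e ∈ S}) ≠ x := fun hc => hex (congrArg Subtype.val hc)
        simp [subdiv, hne, hex]
  have h2 : ∑ e : (G.subdiv S).E, (if (G.subdiv S).src e = Sum.inr x then φ e else 0) =
      φ (Sum.inr (x, true)) := by
    rw [sum_subdivE_eq _ (fun _ => 0) (fun _ => 0)
      (fun e => if e = x.1 then φ (Sum.inr (x, true)) else 0)
      (fun e h => by simp [subdiv]) (fun e h => by simp [subdiv]) ?_]
    · simp [Finset.sum_ite_eq' S x.1, x.2]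
    · intro e h
      by_cases hex : e = x.1
      · have hx : (⟨e, h⟩ : {e // e ∈ S}) = x := Subtype.ext hex
        rw [hx]
        simp [subdiv, hex]
      · have hne : (⟨e, h⟩ : {e // e ∈ S}) ≠ x := fun hc => hex (congrArg Subtype.val hc)
        simp [subdiv, hne, hex]
  convert congrArg₂ (· - ·) h1 h2

lemma sum_divOf_eq (G : MGraph) (φ : G.E → ℤ) (W : Finset G.V) :
    ∑ v ∈ W, G.divOf φ v =
      ∑ e : G.E, ((if G.tgt e ∈ W then 1 else 0) - (if G.src e ∈ W then 1 else 0)) * φ e := by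
  unfold divOf
  rw [Finset.sum_sub_distrib]
  have h1 : ∑ v ∈ W, ∑ e : G.E, (if G.tgt e = v then φ e else 0)
      = ∑ e : G.E, (if G.tgt e ∈ W then φ e else 0) := by
    rw [Finset.sum_comm]
    exact Finset.sum_congr rfl fun e _ => Finset.sum_ite_eq W (G.tgt e) (fun _ => φ e)
  have h2 : ∑ v ∈ W, ∑ e : G.E, (if G.src e = v then φ e else 0)
      = ∑ e : G.E, (if G.src e ∈ W then φ e else 0) := by
    rw [Finset.sum_comm]
    exact Finset.sum_congr rfl fun e _ => Finset.sum_ite_eq W (G.src e) (fun _ => φ e)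
  rw [h1, h2, ← Finset.sum_sub_distrib]
  apply Finset.sum_congr rfl
  intro e _
  by_cases ht : G.tgt e ∈ W <;> by_cases hs : G.src e ∈ W <;> simp [ht, hs]

lemma sum_divOf_beta (G : MGraph) (φ : G.E → ℤ) (D : G.V → ℤ)
    (heq : ∀ v, 2 * D v + G.divOf φ v = G.K v) (W : Finset G.V) :
    ((∑ v ∈ W, G.divOf φ v : ℤ) : ℚ) = (G.delta W : ℚ) - 2 * G.beta G.canPol D W := by
  have h : ∑ v ∈ W, (2 * D v + G.divOf φ v) = ∑ v ∈ W, G.K v :=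
    Finset.sum_congr rfl fun v _ => heq v
  rw [Finset.sum_add_distrib, ← Finset.mul_sum] at h
  have hq := congrArg (fun z : ℤ => (z : ℚ)) h
  push_cast at hq
  simp only [beta, canPol]
  rw [← Finset.sum_div]
  push_cast
  linarith

lemma inflow_lower (G : MGraph) (φ : G.E → ℤ) (W : Finset G.V)
    (hcr : ∀ e, G.crossing W e →
      1 ≤ ((if G.tgt e ∈ W then 1 else 0) - (if G.src e ∈ W then 1 else 0)) * φ e)
    (e₀ : G.E) (h0 : G.crossing W e₀) (m : ℤ)
    (hm : m ≤ ((if G.tgt e₀ ∈ W then 1 else 0) - (if G.src e₀ ∈ W then 1 else 0)) * φ e₀) :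
    (G.delta W : ℤ) + (m - 1) ≤ ∑ v ∈ W, G.divOf φ v := by
  classical
  set c : G.E → ℤ := fun e => (if G.tgt e ∈ W then 1 else 0) - (if G.src e ∈ W then 1 else 0)
    with hc
  set F : Finset G.E := Finset.univ.filter (fun e => G.crossing W e) with hF
  have hsplit : ∑ e : G.E, c e * φ e = ∑ e ∈ F, c e * φ e := by
    symm
    apply Finset.sum_subset (Finset.filter_subset _ _)
    intro e _ he
    have hnc : ¬ G.crossing W e := by
      simpa [hF] using he
    have hEq : (G.src e ∈ W) = (G.tgt e ∈ W) := by
      by_contra hne; exact hnc hne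
    simp [hc, hEq]
  have hdelta : (G.delta W : ℤ) = ∑ _e ∈ F, (1 : ℤ) := by
    simp [delta, hF]
  have he₀F : e₀ ∈ F := by simp [hF, h0]
  have hstep : c e₀ * φ e₀ - 1 ≤ ∑ e ∈ F, (c e * φ e - 1) := by
    apply Finset.single_le_sum (f := fun e => c e * φ e - 1) _ he₀F
    intro i hi
    have : G.crossing W i := by simpa [hF] using hi
    have := hcr i this
    simp only [hc]
    omega
  have hsum : ∑ e ∈ F, (c e * φ e - 1) = ∑ e ∈ F, c e * φ e - ∑ _e ∈ F, (1 : ℤ) :=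
    Finset.sum_sub_distrib _ _
  rw [sum_divOf_eq, hsplit]
  rw [hsum] at hstep
  rw [hdelta]
  simp only [hc] at hstep hm ⊢
  omega

lemma betaPoly_le_beta (D : (G.subdiv S).V → ℤ) (hD : G.IsPseudoDivisor S D)
    (W' : Finset (G.subdiv S).V) :
    G.betaPoly S D (Finset.univ.filter (fun v => Sum.inl v ∈ W')) ≤
      (G.subdiv S).beta (G.subdiv S).canPol D W' := by
  classical
  set W : Finset G.V := Finset.univ.filter (fun v => Sum.inl v ∈ W') with hW
  have hmemW : ∀ v : G.V, (Sum.inl v ∈ W') ↔ v ∈ W := by intro v; simp [hW]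
  set mm : G.E → Prop := fun e => ∃ h : e ∈ S, Sum.inr (⟨e, h⟩ : {e // e ∈ S}) ∈ W' with hmm
  have hmm' : ∀ (e : G.E) (h : e ∈ S), (Sum.inr (⟨e, h⟩ : {e // e ∈ S}) ∈ W') ↔ mm e := by
    intro e h
    constructor
    · intro hx; exact ⟨h, hx⟩
    · rintro ⟨h', hx⟩; exact hx
  have hmemW2 : ∀ v : G.V,
      @Membership.mem (G.subdiv S).V (Finset (G.subdiv S).V) _ W' (Sum.inl v) ↔ v ∈ W := hmemW
  have hmm2 : ∀ (e : G.E) (h : e ∈ S),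
      @Membership.mem (G.subdiv S).V (Finset (G.subdiv S).V) _ W' (Sum.inr ⟨e, h⟩) ↔ mm e :=
    hmm'
  -- (a) divisor sum
  have ha : ∑ v ∈ W', (D v : ℚ) =
      (∑ v ∈ W, (D (Sum.inl v) : ℚ)) + ∑ e ∈ S, (if mm e then (-1 : ℚ) else 0) := by
    have h0 : ∑ v : (G.subdiv S).V, (if v ∈ W' then (D v : ℚ) else 0) = ∑ v ∈ W', (D v : ℚ) := by
      rw [Finset.sum_ite_mem, Finset.univ_inter]
    rw [← h0, sum_subdivV_eq _ (fun e => if mm e then (-1 : ℚ) else 0) ?_]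
    · congr 1
      rw [hW, Finset.sum_filter]
      convert rfl
      exact Iff.rfl
    · intro e h
      rw [hD ⟨e, h⟩]
      simp only [hmm2 e h]
      norm_num
  -- (b) polarization sum
  have hb : ∑ v ∈ W', (G.subdiv S).canPol v = ∑ v ∈ W, G.canPol v := by
    have h0 : ∑ v : (G.subdiv S).V, (if v ∈ W' then (G.subdiv S).canPol v else 0)
        = ∑ v ∈ W', (G.subdiv S).canPol v := by
      rw [Finset.sum_ite_mem, Finset.univ_inter]
    rw [← h0, sum_subdivV_eq _ (fun _ => 0) ?_]
    · rw [Finset.sum_const, smul_zero, add_zero, hW, Finset.sum_filter]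
      exact Finset.sum_congr rfl fun v _ => by rw [subdiv_canPol_inl]; convert rfl; exact Iff.rfl
    · intro e h
      rw [subdiv_canPol_inr]
      simp
  -- (c) delta
  have hc : ((G.subdiv S).delta W' : ℚ) =
      ((Finset.univ.filter (fun e => e ∉ S ∧ G.crossing W e)).card : ℚ)
      + ∑ e ∈ S, ((if (G.src e ∈ W) = mm e then (0:ℚ) else 1)
          + (if mm e = (G.tgt e ∈ W) then (0:ℚ) else 1)) := by
    unfold delta
    rw [cast_card_filter]
    rw [sum_subdivE_eq _ (fun e => if G.crossing W e ∧ e ∉ S then (1:ℚ) else 0)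
        (fun e => if (G.src e ∈ W) = mm e then (0:ℚ) else 1)
        (fun e => if mm e = (G.tgt e ∈ W) then (0:ℚ) else 1) ?_ ?_ ?_]
    · congr 1
      · rw [Finset.card_filter, Nat.cast_sum]
        have h1 : ∑ e ∈ Sᶜ, (if G.crossing W e ∧ e ∉ S then (1:ℚ) else 0)
            = ∑ e : G.E, if e ∈ Sᶜ then (if G.crossing W e ∧ e ∉ S then (1:ℚ) else 0) else 0 := by
          rw [Finset.sum_ite_mem, Finset.univ_inter]
        rw [h1]
        apply Finset.sum_congr rfl
        intro e _
        by_cases h1 : e ∈ S <;> by_cases h2 : G.crossing W e <;>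
          simp [h1, h2, Finset.mem_compl]
    · intro e h
      have hs : (G.subdiv S).crossing W' (Sum.inl ⟨e, h⟩) ↔ (G.crossing W e ∧ e ∉ S) := by
        have e1 : (G.subdiv S).src (Sum.inl ⟨e, h⟩) = Sum.inl (G.src e) := rfl
        have e2 : (G.subdiv S).tgt (Sum.inl ⟨e, h⟩) = Sum.inl (G.tgt e) := rfl
        unfold crossing
        rw [e1, e2]
        by_cases h1 : G.src e ∈ W <;> by_cases h2 : G.tgt e ∈ W <;>
          simp [hmemW2, h1, h2, h]
      rw [if_congr hs rfl rfl]
    · intro e h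
      have hs : (G.subdiv S).crossing W' (Sum.inr (⟨e, h⟩, false))
          ↔ ¬ ((G.src e ∈ W) = mm e) := by
        have e1 : (G.subdiv S).src (Sum.inr ((⟨e, h⟩ : {e // e ∈ S}), false))
            = Sum.inl (G.src e) := rfl
        have e2 : (G.subdiv S).tgt (Sum.inr ((⟨e, h⟩ : {e // e ∈ S}), false))
            = Sum.inr ⟨e, h⟩ := rfl
        unfold crossing
        rw [e1, e2]
        by_cases h1 : G.src e ∈ W <;> by_cases h2 : mm e <;>
          simp [hmemW2, hmm2 e h, h1, h2]
      rw [if_congr hs rfl rfl]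
      by_cases h1 : (G.src e ∈ W) = mm e <;> simp [h1]
    · intro e h
      have hs : (G.subdiv S).crossing W' (Sum.inr (⟨e, h⟩, true))
          ↔ ¬ (mm e = (G.tgt e ∈ W)) := by
        have e1 : (G.subdiv S).src (Sum.inr ((⟨e, h⟩ : {e // e ∈ S}), true))
            = Sum.inr ⟨e, h⟩ := rfl
        have e2 : (G.subdiv S).tgt (Sum.inr ((⟨e, h⟩ : {e // e ∈ S}), true))
            = Sum.inl (G.tgt e) := rfl
        unfold crossing
        rw [e1, e2]
        by_cases h1 : G.tgt e ∈ W <;> by_cases h2 : mm e <;>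
          simp [hmemW2, hmm2 e h, h1, h2]
      rw [if_congr hs rfl rfl]
      by_cases h1 : mm e = (G.tgt e ∈ W) <;> simp [h1]
  -- (d) degIn sum
  have hd : ∑ v ∈ W, (G.degIn S v : ℚ) =
      ∑ e ∈ S, ((if G.src e ∈ W then (1:ℚ) else 0) + (if G.tgt e ∈ W then (1:ℚ) else 0)) := by
    have h1 : ∀ v : G.V, (G.degIn S v : ℚ) =
        ∑ e ∈ S, ((if G.src e = v then (1:ℚ) else 0) + (if G.tgt e = v then (1:ℚ) else 0)) := by
      intro v
      unfold degIn
      rw [Nat.cast_add, Finset.card_filter, Finset.card_filter, Nat.cast_sum, Nat.cast_sum,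
        ← Finset.sum_add_distrib]
      apply Finset.sum_congr rfl
      intro e _
      by_cases h1 : G.src e = v <;> by_cases h2 : G.tgt e = v <;> simp [h1, h2]
    rw [Finset.sum_congr rfl (fun v (_ : v ∈ W) => h1 v), Finset.sum_comm]
    apply Finset.sum_congr rfl
    intro e _
    rw [Finset.sum_add_distrib, Finset.sum_ite_eq W (G.src e) (fun _ => (1:ℚ)),
      Finset.sum_ite_eq W (G.tgt e) (fun _ => (1:ℚ))]
  -- pointwise nonnegativity
  have key : ∀ e ∈ S, (0:ℚ) ≤ (if mm e then (-1 : ℚ) else 0)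
      + ((if (G.src e ∈ W) = mm e then (0:ℚ) else 1) + (if mm e = (G.tgt e ∈ W) then (0:ℚ) else 1)) / 2
      + ((if G.src e ∈ W then (1:ℚ) else 0) + (if G.tgt e ∈ W then (1:ℚ) else 0)) / 2 := by
    intro e _
    by_cases h1 : mm e <;> by_cases h2 : G.src e ∈ W <;> by_cases h3 : G.tgt e ∈ W <;>
      simp [h1, h2, h3] <;> norm_num
  have hsum : (0:ℚ) ≤ ∑ e ∈ S, ((if mm e then (-1 : ℚ) else 0)
      + ((if (G.src e ∈ W) = mm e then (0:ℚ) else 1) + (if mm e = (G.tgt e ∈ W) then (0:ℚ) else 1)) / 2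
      + ((if G.src e ∈ W then (1:ℚ) else 0) + (if G.tgt e ∈ W then (1:ℚ) else 0)) / 2) :=
    Finset.sum_nonneg key
  rw [Finset.sum_add_distrib, Finset.sum_add_distrib, ← Finset.sum_div, ← Finset.sum_div] at hsum
  unfold beta betaPoly
  rw [ha, hb, hc, Finset.sum_add_distrib, ← Finset.sum_div, hd]
  push_cast
  linarith

lemma beta_subdiv_nonneg (D : (G.subdiv S).V → ℤ) (hD : G.IsPseudoDivisor S D)
    (hps : G.IsPolystable S D) (W' : Finset (G.subdiv S).V) :
    0 ≤ (G.subdiv S).beta (G.subdiv S).canPol D W' :=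
  le_trans (hps (Finset.univ.filter (fun v => Sum.inl v ∈ W'))).1 (betaPoly_le_beta D hD W')

lemma beta_subdiv_pos (D : (G.subdiv S).V → ℤ) (hD : G.IsPseudoDivisor S D)
    (hps : G.IsPolystable S D) (W' : Finset (G.subdiv S).V) (e₀ : G.E) (he₀ : e₀ ∉ S)
    (hcr : G.crossing (Finset.univ.filter (fun v => Sum.inl v ∈ W')) e₀) :
    0 < (G.subdiv S).beta (G.subdiv S).canPol D W' :=
  lt_of_lt_of_le ((hps (Finset.univ.filter (fun v => Sum.inl v ∈ W'))).2 ⟨e₀, he₀, hcr⟩)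
    (betaPoly_le_beta D hD W')

lemma SPath.toCycle {G : MGraph} {Q : G.OEdge → Prop} {u v : G.V} {p : List G.OEdge}
    (h : G.SPath Q u v p) {oe : G.OEdge} (hs : G.osrc oe = v) (ht : G.otgt oe = u)
    (hnm : oe.1 ∉ p.map Prod.fst) : G.IsOrientedCycle (p ++ [oe]) := by
  have hvl : (p ++ [oe]).map G.osrc = u :: p.map G.otgt := by
    rw [List.map_append]
    simp only [List.map_cons, List.map_nil]
    rw [hs, h.chain, ← h.lastv]
    exact List.dropLast_append_getLast (List.cons_ne_nil _ _)
  apply isOrientedCycle_of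
  · simp
  · have h1 : (p ++ [oe]).map Prod.fst = p.map Prod.fst ++ [oe.1] := by simp
    rw [h1]
    simp [List.nodup_append, h.nodupE, hnm]
    rintro a (ha | ha) rfl <;> exact hnm (List.mem_map.mpr ⟨_, ha, rfl⟩)
  · rw [hvl]; exact h.nodupV
  · rw [hvl, List.rotate_cons_succ, List.rotate_zero, List.map_append]
    simp [ht]

lemma cut_beta_generic (H : MGraph) (φ : H.E → ℤ) (D : H.V → ℤ)
    (hacyc : H.Acyclic φ) (heq : ∀ v, 2 * D v + H.divOf φ v = H.K v)
    (oe₀ : H.OEdge) (hpos : 1 ≤ H.flowVal φ oe₀) (Wb : Finset H.V)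
    (hWb : Wb = Finset.univ.filter (fun v =>
      H.QWalk (fun oe => 0 ≤ H.flowVal φ oe) (H.otgt oe₀) v)) :
    2 * H.beta H.canPol D Wb ≤ 1 - (H.flowVal φ oe₀ : ℚ) ∧
      H.osrc oe₀ ∉ Wb ∧ H.otgt oe₀ ∈ Wb := by
  classical
  set Q : H.OEdge → Prop := fun oe => 0 ≤ H.flowVal φ oe with hQ
  set z : H.V := H.otgt oe₀ with hz
  have hmem : ∀ v, v ∈ Wb ↔ H.QWalk Q z v := by intro v; simp [hWb]
  have hzW : z ∈ Wb := (hmem z).mpr Relation.ReflTransGen.refl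
  have hclosed : ∀ a b, a ∈ Wb → H.QStep Q a b → b ∈ Wb := by
    intro a b ha hstep
    exact (hmem b).mpr (Relation.ReflTransGen.tail ((hmem a).mp ha) hstep)
  -- source of oe₀ is not in Wb
  have hsrc : H.osrc oe₀ ∉ Wb := by
    intro hmem'
    obtain ⟨p, hp⟩ := QWalk.exists_spath ((hmem _).mp hmem')
    have hnm : oe₀.1 ∉ p.map Prod.fst := by
      intro hin
      obtain ⟨oe', hoe', hfst⟩ := List.mem_map.mp hin
      by_cases hb : oe'.2 = oe₀.2
      · have heqq : oe' = oe₀ := Prod.ext hfst hb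
        have h1 : H.otgt oe₀ ∈ p.map H.otgt := by
          rw [← heqq]; exact List.mem_map_of_mem hoe'
        rw [← hz] at h1
        exact (List.nodup_cons.mp hp.nodupV).1 h1
      · have heqq : oe' = (oe₀.1, !oe₀.2) := by
          have h2 : oe'.2 = (oe₀.1, !oe₀.2).2 := by
            show oe'.2 = !oe₀.2
            cases hx : oe'.2 <;> cases hy : oe₀.2 <;> simp_all
          have h1 : oe'.1 = (oe₀.1, !oe₀.2).1 := hfst
          exact Prod.ext h1 h2
        have hQ' : Q oe' := hp.mem _ hoe'
        rw [heqq] at hQ'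
        have := flowVal_flip (G := H) φ oe₀
        simp only [hQ] at hQ'
        omega
    have hcyc := hp.toCycle (oe := oe₀) rfl rfl hnm
    apply hacyc
    refine ⟨p ++ [oe₀], hcyc, ?_, oe₀, by simp, by omega⟩
    intro oe hoe
    rcases List.mem_append.mp hoe with h1 | h1
    · exact hp.mem _ h1
    · rw [List.mem_singleton.mp h1]; omega
  -- every crossing edge contributes at least 1 inward
  have hcontrib : ∀ e, H.crossing Wb e →
      1 ≤ ((if H.tgt e ∈ Wb then 1 else 0) - (if H.src e ∈ Wb then 1 else 0)) * φ e := by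
    intro e hcr
    by_cases hs : H.src e ∈ Wb <;> by_cases ht : H.tgt e ∈ Wb
    · exact absurd (propext ⟨fun _ => ht, fun _ => hs⟩) hcr
    · have hflow : ¬ (0 ≤ H.flowVal φ (e, true)) := by
        intro hge
        exact ht (hclosed _ _ hs ⟨(e, true), hge, rfl, rfl⟩)
      simp [flowVal] at hflow
      rw [if_neg ht, if_pos hs]
      linarith
    · have hflow : ¬ (0 ≤ H.flowVal φ (e, false)) := by
        intro hge
        exact hs (hclosed _ _ ht ⟨(e, false), hge, rfl, rfl⟩)
      simp [flowVal] at hflow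
      rw [if_pos ht, if_neg hs]
      linarith
    · exact absurd (propext ⟨fun hx => absurd hx hs, fun hx => absurd hx ht⟩) hcr
  -- oe₀ is a crossing edge with inward contribution at least flowVal φ oe₀
  have hcr0 : H.crossing Wb oe₀.1 ∧ H.flowVal φ oe₀ ≤
      ((if H.tgt oe₀.1 ∈ Wb then 1 else 0) - (if H.src oe₀.1 ∈ Wb then 1 else 0)) * φ oe₀.1 := by
    obtain ⟨e, b⟩ := oe₀
    cases b
    · have h1 : H.tgt e ∉ Wb := by simpa [osrc] using hsrc
      have h2 : H.src e ∈ Wb := by simpa [otgt, hz] using hzW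
      constructor
      · intro heqq; rw [heqq] at h2; exact h1 h2
      · rw [if_neg h1, if_pos h2]
        simp [flowVal]
    · have h1 : H.src e ∉ Wb := by simpa [osrc] using hsrc
      have h2 : H.tgt e ∈ Wb := by simpa [otgt, hz] using hzW
      constructor
      · intro heqq; rw [heqq] at h1; exact h1 h2
      · rw [if_pos h2, if_neg h1]
        simp [flowVal]
  have hlow := inflow_lower H φ Wb hcontrib oe₀.1 hcr0.1 (H.flowVal φ oe₀) hcr0.2
  have hbeta := sum_divOf_beta H φ D heq Wb
  refine ⟨?_, hsrc, hzW⟩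
  have hcast : (((H.delta Wb : ℤ) + (H.flowVal φ oe₀ - 1) : ℤ) : ℚ) ≤
      ((∑ v ∈ Wb, H.divOf φ v : ℤ) : ℚ) := Int.cast_le.mpr hlow
  rw [hbeta] at hcast
  push_cast at hcast
  linarith

lemma flowVal_le_one {G : MGraph} {S : Finset G.E} (D : (G.subdiv S).V → ℤ)
    (hD : G.IsPseudoDivisor S D) (hps : G.IsPolystable S D)
    (φ : (G.subdiv S).E → ℤ) (hacyc : (G.subdiv S).Acyclic φ)
    (heq : ∀ v, 2 * D v + (G.subdiv S).divOf φ v = (G.subdiv S).K v) :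
    ∀ oe : (G.subdiv S).OEdge, (G.subdiv S).flowVal φ oe ≤ 1 := by
  intro oe
  by_contra hlt
  push_neg at hlt
  obtain ⟨hb, -, -⟩ := cut_beta_generic (G.subdiv S) φ D hacyc heq oe (by omega) _ rfl
  have h0 := beta_subdiv_nonneg D hD hps (Finset.univ.filter (fun v =>
    (G.subdiv S).QWalk (fun oe' => 0 ≤ (G.subdiv S).flowVal φ oe')
      ((G.subdiv S).otgt oe) v))
  have hm : (2 : ℚ) ≤ ((G.subdiv S).flowVal φ oe : ℚ) := by
    have : (2 : ℤ) ≤ (G.subdiv S).flowVal φ oe := by omega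
    exact_mod_cast this
  linarith

lemma phi_inl_zero {G : MGraph} {S : Finset G.E} (D : (G.subdiv S).V → ℤ)
    (hD : G.IsPseudoDivisor S D) (hps : G.IsPolystable S D)
    (φ : (G.subdiv S).E → ℤ) (hacyc : (G.subdiv S).Acyclic φ)
    (heq : ∀ v, 2 * D v + (G.subdiv S).divOf φ v = (G.subdiv S).K v) :
    ∀ (e : G.E) (h : e ∉ S), φ (Sum.inl ⟨e, h⟩) = 0 := by
  intro e h
  by_contra hne
  obtain ⟨b, hposb⟩ : ∃ b, 1 ≤ (G.subdiv S).flowVal φ (Sum.inl ⟨e, h⟩, b) := by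
    rcases lt_or_gt_of_ne hne with h1 | h1
    · exact ⟨false, by simp [flowVal]; omega⟩
    · exact ⟨true, by simp [flowVal]; omega⟩
  obtain ⟨hb, hsrc, htgt⟩ :=
    cut_beta_generic (G.subdiv S) φ D hacyc heq (Sum.inl ⟨e, h⟩, b) hposb _ rfl
  set Wb : Finset (G.subdiv S).V := Finset.univ.filter (fun v =>
    (G.subdiv S).QWalk (fun oe' => 0 ≤ (G.subdiv S).flowVal φ oe')
      ((G.subdiv S).otgt (Sum.inl ⟨e, h⟩, b)) v) with hWb
  have hcrG : G.crossing (Finset.univ.filter (fun v : G.V => Sum.inl v ∈ Wb)) e := by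
    cases b with
    | true =>
      have hs' : (Sum.inl (G.src e) : (G.subdiv S).V) ∉ Wb := hsrc
      have ht' : (Sum.inl (G.tgt e) : (G.subdiv S).V) ∈ Wb := htgt
      intro heqq
      have h2 : G.tgt e ∈ Finset.univ.filter (fun v : G.V => Sum.inl v ∈ Wb) := by
        simp [ht']
      rw [← heqq] at h2
      exact hs' (by simpa using h2)
    | false =>
      have hs' : (Sum.inl (G.tgt e) : (G.subdiv S).V) ∉ Wb := hsrc
      have ht' : (Sum.inl (G.src e) : (G.subdiv S).V) ∈ Wb := htgt
      intro heqq
      have h2 : G.src e ∈ Finset.univ.filter (fun v : G.V => Sum.inl v ∈ Wb) := by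
        simp [ht']
      rw [heqq] at h2
      exact hs' (by simpa using h2)
  have hposQ := beta_subdiv_pos D hD hps Wb e h hcrG
  have hm : (1 : ℚ) ≤ ((G.subdiv S).flowVal φ (Sum.inl ⟨e, h⟩, b) : ℚ) := by
    exact_mod_cast hposb
  linarith

lemma phi_exc {G : MGraph} {S : Finset G.E} (D : (G.subdiv S).V → ℤ)
    (hD : G.IsPseudoDivisor S D) (hps : G.IsPolystable S D)
    (φ : (G.subdiv S).E → ℤ) (hacyc : (G.subdiv S).Acyclic φ)
    (heq : ∀ v, 2 * D v + (G.subdiv S).divOf φ v = (G.subdiv S).K v) (x : {e // e ∈ S}) :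
    φ (Sum.inr (x, false)) = 1 ∧ φ (Sum.inr (x, true)) = -1 := by
  have h1 := heq (Sum.inr x)
  rw [subdiv_divOf_inr, subdiv_K_inr, hD x] at h1
  have h2 := flowVal_le_one D hD hps φ hacyc heq (Sum.inr (x, false), true)
  have h3 := flowVal_le_one D hD hps φ hacyc heq (Sum.inr (x, true), false)
  simp [flowVal] at h2 h3
  omega

lemma QStep_symm {G : MGraph} {Q : G.OEdge → Prop}
    (hQ : ∀ oe : G.OEdge, Q oe → Q (oe.1, !oe.2)) : Symmetric (G.QStep Q) := by
  rintro a b ⟨oe, hq, hs, ht⟩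
  exact ⟨(oe.1, !oe.2), hQ oe hq, by rw [osrc_flip, ht], by rw [otgt_flip, hs]⟩

lemma exists_potential (H : MGraph) (w : H.OEdge → ℝ)
    (hanti : ∀ (ε : H.E) (b : Bool), w (ε, !b) = - w (ε, b))
    (hcyc : ∀ c : List H.OEdge, H.IsOrientedCycle c → (c.map w).sum = 0) :
    ∃ g : H.V → ℝ, ∀ oe : H.OEdge, w oe = g (H.otgt oe) - g (H.osrc oe) := by
  classical
  suffices hP : ∀ A : Finset H.E, ∃ g : H.V → ℝ,
      ∀ oe : H.OEdge, oe.1 ∈ A → w oe = g (H.otgt oe) - g (H.osrc oe) by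
    obtain ⟨g, hg⟩ := hP Finset.univ
    exact ⟨g, fun oe => hg oe (Finset.mem_univ _)⟩
  intro A
  induction A using Finset.induction_on with
  | empty => exact ⟨0, fun oe hoe => absurd hoe (by simp)⟩
  | @insert ε A hni ih =>
    obtain ⟨g, hg⟩ := ih
    set Q : H.OEdge → Prop := fun oe => oe.1 ∈ A with hQdef
    have hQs : ∀ oe : H.OEdge, Q oe → Q (oe.1, !oe.2) := fun oe h => h
    by_cases hreach : H.QWalk Q (H.src ε) (H.tgt ε)
    · by_cases hEA : ε ∈ A
      · refine ⟨g, fun oe hoe => hg oe ?_⟩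
        rcases Finset.mem_insert.mp hoe with h | h
        · rwa [h]
        · exact h
      · obtain ⟨p, hp⟩ := QWalk.exists_spath hreach
        have hnm : ε ∉ p.map Prod.fst := by
          intro hin
          obtain ⟨oe', ho, hf⟩ := List.mem_map.mp hin
          exact hEA (hf ▸ hp.mem _ ho)
        have hcycle := hp.toCycle (oe := (ε, false)) rfl rfl hnm
        have hsum := hcyc _ hcycle
        rw [List.map_append, List.sum_append] at hsum
        simp only [List.map_cons, List.map_nil, List.sum_cons, List.sum_nil, add_zero] at hsum
        have htel := SPath.telescope w g p (H.src ε) hp (fun oe ho => hg oe (hp.mem _ ho))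
        rw [htel] at hsum
        have hval : w (ε, false) = g (H.src ε) - g (H.tgt ε) := by linarith
        have hval2 : w (ε, true) = g (H.tgt ε) - g (H.src ε) := by
          have h1 := hanti ε false
          simp only [Bool.not_false] at h1
          rw [h1, hval]; ring
        refine ⟨g, fun oe hoe => ?_⟩
        rcases Finset.mem_insert.mp hoe with h | h
        · obtain ⟨e', b⟩ := oe
          simp only at h
          subst h
          cases b
          · exact hval
          · exact hval2
        · exact hg oe h
    · set R : H.V → Prop := fun v => H.QWalk Q (H.tgt ε) v with hRdef
      set c₀ : ℝ := w (ε, true) - (g (H.tgt ε) - g (H.src ε)) with hc₀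
      have hRt : R (H.tgt ε) := Relation.ReflTransGen.refl
      have hRs : ¬ R (H.src ε) := by
        intro hr
        exact hreach (@Std.Symm.symm _ _ (@Relation.ReflTransGen.stdSymm _ _ ⟨fun _ _ h => QStep_symm hQs h⟩) _ _ hr)
      refine ⟨fun v => if R v then g v + c₀ else g v, fun oe hoe => ?_⟩
      show w oe = (if R (H.otgt oe) then g (H.otgt oe) + c₀ else g (H.otgt oe)) -
          (if R (H.osrc oe) then g (H.osrc oe) + c₀ else g (H.osrc oe))
      rcases Finset.mem_insert.mp hoe with h | h
      · obtain ⟨e', b⟩ := oe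
        simp only at h
        subst h
        cases b
        · rw [show H.otgt (e', false) = H.src e' from rfl,
            show H.osrc (e', false) = H.tgt e' from rfl, if_neg hRs, if_pos hRt]
          have h1 := hanti e' true
          simp only [Bool.not_true] at h1
          rw [h1, hc₀]; ring
        · rw [show H.otgt (e', true) = H.tgt e' from rfl,
            show H.osrc (e', true) = H.src e' from rfl, if_pos hRt, if_neg hRs, hc₀]
          ring
      · have hinv : R (H.osrc oe) ↔ R (H.otgt oe) := by
          constructor
          · intro hr
            exact hr.tail ⟨oe, h, rfl, rfl⟩
          · intro hr
            exact hr.tail ⟨(oe.1, !oe.2), hQs oe h, osrc_flip oe, otgt_flip oe⟩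
        by_cases hro : R (H.osrc oe)
        · rw [if_pos (hinv.mp hro), if_pos hro, hg oe h]; ring
        · rw [if_neg (fun hr => hro (hinv.mpr hr)), if_neg hro]
          exact hg oe h

/-- The averaging retraction `ℝ^{E(Γ^S)} → ℝ^{E(Γ)}`. -/
def avgMap (G : MGraph) (S : Finset G.E) :
    ((G.subdiv S).E → ℝ) →ₗ[ℝ] (G.E → ℝ) :=
  LinearMap.pi (fun e =>
    if he : e ∈ S then
      (1 / 2 : ℝ) • (LinearMap.proj (R := ℝ) (φ := fun _ : (G.subdiv S).E => ℝ)
          (Sum.inr (⟨e, he⟩, false))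
        + LinearMap.proj (R := ℝ) (φ := fun _ : (G.subdiv S).E => ℝ)
          (Sum.inr (⟨e, he⟩, true)))
    else LinearMap.proj (R := ℝ) (φ := fun _ : (G.subdiv S).E => ℝ) (Sum.inl ⟨e, he⟩))

lemma avgMap_apply {G : MGraph} {S : Finset G.E} (z : (G.subdiv S).E → ℝ) (e : G.E) :
    G.avgMap S z e = if he : e ∈ S then
      (z (Sum.inr (⟨e, he⟩, false)) + z (Sum.inr (⟨e, he⟩, true))) / 2
    else z (Sum.inl ⟨e, he⟩) := by
  unfold avgMap
  rw [LinearMap.pi_apply]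
  split
  · simp only [LinearMap.smul_apply, LinearMap.add_apply, LinearMap.proj_apply, smul_eq_mul]
    change (1 / 2 : ℝ) * (z _ + z _) = _
    ring
  · rfl

lemma avgMap_delta {G : MGraph} {S : Finset G.E} (x : G.E → ℝ) :
    G.avgMap S (G.deltaMap S x) = x := by
  funext e
  rw [avgMap_apply]
  split
  · simp only [deltaMap]; ring
  · simp only [deltaMap]

lemma avgMap_LSub {G : MGraph} {S : Finset G.E} {z : (G.subdiv S).E → ℝ}
    (hz : z ∈ G.LSub S) : G.avgMap S z = 0 := by
  have hle : G.LSub S ≤ LinearMap.ker (G.avgMap S) := by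
    rw [LSub, Submodule.span_le]
    rintro u ⟨W, hW, rfl⟩
    rw [SetLike.mem_coe, LinearMap.mem_ker]
    funext e
    rw [avgMap_apply]
    split
    · next he =>
      by_cases hcr : G.crossing W e
      · by_cases hs : G.src e ∈ W <;> by_cases ht : G.tgt e ∈ W
        · exact absurd (propext ⟨fun _ => ht, fun _ => hs⟩) hcr
        · simp [uVec, hcr, hs, ht]
        · simp [uVec, hcr, hs, ht]
        · exact absurd (propext ⟨fun hx => absurd hx hs, fun hx => absurd hx ht⟩) hcr
      · simp [uVec, hcr]
    · simp [uVec]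
  simpa using hle hz

end Counting


end MGraph

attribute [local instance] Classical.propDecidable

/-- For a polystable root-graph `(Γ, S, D)` with acyclic
flow `φ`, the composite of `δ_S : ℝ^{E(Γ)} → ℝ^{E(Γ^S)}` with the quotient
map `T_S : ℝ^{E(Γ^S)} → ℝ^{E(Γ^S)}/L_S` restricts to an isomorphism (a
bijection) from the cone `ℝ^{E(Γ)}_{≥0}` onto the cone
`κ = T_S(λ_{(Γ,S,D)})`. -/
theorem stmt14 (G : MGraph) (hconn : G.Connected) (S : Finset G.E)
    (D : (G.subdiv S).V → ℤ) (hroot : G.IsPseudoRoot S D)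
    (hps : G.IsPolystable S D)
    (φ : (G.subdiv S).E → ℤ) (hacyc : (G.subdiv S).Acyclic φ)
    (heq : ∀ v, 2 * D v + (G.subdiv S).divOf φ v = (G.subdiv S).K v) :
    Set.BijOn (fun x : G.E → ℝ => (G.LSub S).mkQ (G.deltaMap S x))
      {x | ∀ e, 0 ≤ x e}
      ((G.LSub S).mkQ '' ((G.subdiv S).lambdaSet φ)) := by
  classical
  obtain ⟨hD, -⟩ := hroot
  have hphi := MGraph.phi_exc D hD hps φ hacyc heq
  have h0 := MGraph.phi_inl_zero D hD hps φ hacyc heq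
  -- diagonal vectors lie in the lambda cone
  have hdelta_mem : ∀ x : G.E → ℝ, (∀ e, 0 ≤ x e) →
      G.deltaMap S x ∈ (G.subdiv S).lambdaSet φ := by
    intro x hx
    constructor
    · intro e'
      obtain (e0 | eb) := e'
      · exact hx e0.1
      · exact hx eb.1.1
    · intro c hc
      refine MGraph.cycle_rotate_sum _
        (Sum.elim (fun _ => (0:ℝ)) (fun xx : {e // e ∈ S} => x xx.1)) (fun oe => ?_) hc
      obtain ⟨ε, b⟩ := oe
      obtain (e0 | ⟨xx, bb⟩) := ε
      · have hz : φ (Sum.inl e0) = 0 := by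
          obtain ⟨e1, he1⟩ := e0; exact h0 e1 he1
        cases b <;>
          simp [MGraph.flowVal, hz, MGraph.osrc, MGraph.otgt, MGraph.deltaMap, MGraph.subdiv]
      · cases bb <;> cases b <;>
          simp [MGraph.flowVal, (hphi xx).1, (hphi xx).2, MGraph.osrc, MGraph.otgt,
            MGraph.deltaMap, MGraph.subdiv] <;> push_cast <;> ring
  refine ⟨?_, ?_, ?_⟩
  · -- maps to
    intro x hx
    exact ⟨G.deltaMap S x, hdelta_mem x hx, rfl⟩
  · -- injective
    intro x hx y hy hxy
    have hxy' : (G.LSub S).mkQ (G.deltaMap S x) = (G.LSub S).mkQ (G.deltaMap S y) := hxy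
    rw [Submodule.mkQ_apply, Submodule.mkQ_apply] at hxy'
    have hmem : G.deltaMap S x - G.deltaMap S y ∈ G.LSub S :=
      (Submodule.Quotient.eq _).mp hxy'
    have h1 := MGraph.avgMap_LSub hmem
    rw [map_sub, MGraph.avgMap_delta, MGraph.avgMap_delta] at h1
    exact sub_eq_zero.mp h1
  · -- surjective
    rintro q ⟨y, hy, rfl⟩
    obtain ⟨hynn, hycyc⟩ := hy
    refine ⟨G.avgMap S y, ?_, ?_⟩
    · intro e
      rw [MGraph.avgMap_apply]
      split
      · next he =>
        have h1 := hynn (Sum.inr (⟨e, he⟩, false))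
        have h2 := hynn (Sum.inr (⟨e, he⟩, true))
        linarith
      · exact hynn _
    · show (G.LSub S).mkQ (G.deltaMap S (G.avgMap S y)) = (G.LSub S).mkQ y
      rw [Submodule.mkQ_apply, Submodule.mkQ_apply, Submodule.Quotient.eq]
      -- build the potential
      obtain ⟨g, hgrad⟩ := MGraph.exists_potential (G.subdiv S)
        (fun oe => ((G.subdiv S).flowVal φ oe : ℝ) * y oe.1)
        (fun ε b => by
          show ((G.subdiv S).flowVal φ (ε, !b) : ℝ) * y ε
            = -(((G.subdiv S).flowVal φ (ε, b) : ℝ) * y ε)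
          have hf2 : (G.subdiv S).flowVal φ (ε, !b) = - (G.subdiv S).flowVal φ (ε, b) :=
            MGraph.flowVal_flip φ (ε, b)
          rw [hf2]; push_cast; ring)
        hycyc
      have hyf : ∀ xx : {e // e ∈ S}, y (Sum.inr (xx, false))
          = g (Sum.inr xx) - g (Sum.inl (G.src xx.1)) := by
        intro xx
        have h1 : ((G.subdiv S).flowVal φ (Sum.inr (xx, false), true) : ℝ) * y (Sum.inr (xx, false))
            = g ((G.subdiv S).otgt (Sum.inr (xx, false), true))
              - g ((G.subdiv S).osrc (Sum.inr (xx, false), true)) := hgrad _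
        rw [show (G.subdiv S).flowVal φ (Sum.inr (xx, false), true) = φ (Sum.inr (xx, false))
            from rfl, (hphi xx).1,
          show (G.subdiv S).otgt (Sum.inr (xx, false), true) = Sum.inr xx from rfl,
          show (G.subdiv S).osrc (Sum.inr (xx, false), true) = Sum.inl (G.src xx.1) from rfl] at h1
        push_cast at h1
        linarith
      have hyt : ∀ xx : {e // e ∈ S}, y (Sum.inr (xx, true))
          = g (Sum.inr xx) - g (Sum.inl (G.tgt xx.1)) := by
        intro xx
        have h1 : ((G.subdiv S).flowVal φ (Sum.inr (xx, true), true) : ℝ) * y (Sum.inr (xx, true))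
            = g ((G.subdiv S).otgt (Sum.inr (xx, true), true))
              - g ((G.subdiv S).osrc (Sum.inr (xx, true), true)) := hgrad _
        rw [show (G.subdiv S).flowVal φ (Sum.inr (xx, true), true) = φ (Sum.inr (xx, true))
            from rfl, (hphi xx).2,
          show (G.subdiv S).otgt (Sum.inr (xx, true), true) = Sum.inl (G.tgt xx.1) from rfl,
          show (G.subdiv S).osrc (Sum.inr (xx, true), true) = Sum.inr xx from rfl] at h1
        push_cast at h1
        linarith
      have hgconst : ∀ (e : G.E) (he : e ∉ S), g (Sum.inl (G.tgt e)) = g (Sum.inl (G.src e)) := by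
        intro e he
        have h1 : ((G.subdiv S).flowVal φ (Sum.inl ⟨e, he⟩, true) : ℝ) * y (Sum.inl ⟨e, he⟩)
            = g ((G.subdiv S).otgt (Sum.inl ⟨e, he⟩, true))
              - g ((G.subdiv S).osrc (Sum.inl ⟨e, he⟩, true)) := hgrad _
        rw [show (G.subdiv S).flowVal φ (Sum.inl ⟨e, he⟩, true) = φ (Sum.inl ⟨e, he⟩) from rfl,
          h0 e he,
          show (G.subdiv S).otgt (Sum.inl ⟨e, he⟩, true) = Sum.inl (G.tgt e) from rfl,
          show (G.subdiv S).osrc (Sum.inl ⟨e, he⟩, true) = Sum.inl (G.src e) from rfl] at h1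
        push_cast at h1
        linarith
      -- components of Γ ∖ S
      set h : G.V → ℝ := fun v => g (Sum.inl v) / 2 with hh
      set C : G.V → Finset G.V := fun v => Finset.univ.filter (fun u => G.ReachVia Sᶜ v u)
        with hCdef
      have hCmem : ∀ u v : G.V, u ∈ C v ↔ G.ReachVia Sᶜ v u := by
        intro u v; simp [hCdef]
      have hadj_symm : Symmetric (G.adjVia Sᶜ) := by
        rintro a b ⟨e, he, h1 | h1⟩
        · exact ⟨e, he, Or.inr h1⟩
        · exact ⟨e, he, Or.inl h1⟩
      have hsymm : ∀ {a b : G.V}, G.ReachVia Sᶜ a b → G.ReachVia Sᶜ b a :=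
        fun hab => @Std.Symm.symm _ _ (@Relation.ReflTransGen.stdSymm _ _ ⟨fun _ _ h => hadj_symm h⟩) _ _ hab
      have htrans : ∀ {a b c : G.V}, G.ReachVia Sᶜ a b → G.ReachVia Sᶜ b c → G.ReachVia Sᶜ a c :=
        fun h1 h2 => Relation.ReflTransGen.trans h1 h2
      have hCself : ∀ v, v ∈ C v := fun v => (hCmem v v).mpr Relation.ReflTransGen.refl
      have hCeq : ∀ {u v : G.V}, G.ReachVia Sᶜ v u → C u = C v := by
        intro u v hr
        ext a
        rw [hCmem, hCmem]
        exact ⟨fun h1 => htrans hr h1, fun h1 => htrans (hsymm hr) h1⟩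
      have hhconst : ∀ {a b : G.V}, G.ReachVia Sᶜ a b → h a = h b := by
        intro a b hr
        induction hr with
        | refl => rfl
        | tail _ hstep ih =>
          rw [ih]
          obtain ⟨e, he, ⟨h1, h2⟩ | ⟨h1, h2⟩⟩ := hstep
          · have := hgconst e (Finset.mem_compl.mp he)
            rw [hh]
            simp only
            rw [← h1, ← h2, this]
          · have := hgconst e (Finset.mem_compl.mp he)
            rw [hh]
            simp only
            rw [← h1, ← h2, this]
      have hcrossC : ∀ (v : G.V) (e : G.E), G.crossing (C v) e → e ∈ S := by
        intro v e hcr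
        by_contra heS
        have hadj : G.adjVia Sᶜ (G.src e) (G.tgt e) :=
          ⟨e, Finset.mem_compl.mpr heS, Or.inl ⟨rfl, rfl⟩⟩
        apply hcr
        apply propext
        rw [hCmem, hCmem]
        exact ⟨fun h1 => htrans h1 (Relation.ReflTransGen.single hadj),
          fun h1 => htrans h1 (Relation.ReflTransGen.single (hadj_symm hadj))⟩
      -- the correction vector lies in L_S
      have hPmem : (∑ v : G.V, (h v / ((C v).card : ℝ)) • G.uVec S (C v)) ∈ G.LSub S := by
        apply Submodule.sum_mem
        intro v _
        apply Submodule.smul_mem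
        apply Submodule.subset_span
        exact ⟨C v, fun e hcr => hcrossC v e hcr, rfl⟩
      -- the value of the correction sum on exceptional edges
      have hsumval : ∀ (ex : G.E) (hex : ex ∈ S) (bb : Bool),
          ∑ v : G.V, h v / ((C v).card : ℝ) * G.uVec S (C v) (Sum.inr (⟨ex, hex⟩, bb))
          = (if bb then h (G.tgt ex) - h (G.src ex) else h (G.src ex) - h (G.tgt ex)) := by
        intro ex hex bb
        by_cases hsame : G.ReachVia Sᶜ (G.src ex) (G.tgt ex)
        · have hz : ∀ v : G.V, G.uVec S (C v) (Sum.inr (⟨ex, hex⟩, bb)) = 0 := by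
            intro v
            have hiff : (G.src ex ∈ C v) = (G.tgt ex ∈ C v) := by
              apply propext; rw [hCmem, hCmem]
              exact ⟨fun h1 => htrans h1 hsame, fun h1 => htrans h1 (hsymm hsame)⟩
            have hncr : ¬ G.crossing (C v) ex := fun hcr => hcr hiff
            simp [MGraph.uVec, hncr]
          rw [Finset.sum_congr rfl (fun v _ => by rw [hz v, mul_zero]), Finset.sum_const,
            smul_zero, hhconst hsame]
          cases bb <;> simp
        · have hdisj : ∀ v : G.V, ¬ (v ∈ C (G.src ex) ∧ v ∈ C (G.tgt ex)) := by
            rintro v ⟨h1, h2⟩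
            exact hsame (htrans ((hCmem v _).mp h1) (hsymm ((hCmem v _).mp h2)))
          have hpt : ∀ v : G.V, h v / ((C v).card : ℝ)
                * G.uVec S (C v) (Sum.inr (⟨ex, hex⟩, bb))
              = (if v ∈ C (G.src ex) then
                  (if bb then -(h (G.src ex) / ((C (G.src ex)).card : ℝ))
                    else h (G.src ex) / ((C (G.src ex)).card : ℝ)) else 0)
                + (if v ∈ C (G.tgt ex) then
                  (if bb then h (G.tgt ex) / ((C (G.tgt ex)).card : ℝ)
                    else -(h (G.tgt ex) / ((C (G.tgt ex)).card : ℝ))) else 0) := by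
            intro v
            by_cases hv1 : v ∈ C (G.src ex) <;> by_cases hv2 : v ∈ C (G.tgt ex)
            · exact absurd ⟨hv1, hv2⟩ (hdisj v)
            · have hCv : C v = C (G.src ex) := hCeq ((hCmem v _).mp hv1)
              have hs_in : G.src ex ∈ C v := by rw [hCv]; exact hCself _
              have ht_out : G.tgt ex ∉ C v := by
                rw [hCv]
                intro hmem2
                exact hsame ((hCmem _ _).mp hmem2)
              have hcr : G.crossing (C v) ex := by
                intro heq2; rw [heq2] at hs_in; exact ht_out hs_in
              have hhv : h v = h (G.src ex) := (hhconst ((hCmem v _).mp hv1)).symm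
              rw [if_pos hv1, if_neg hv2, add_zero]
              cases bb
              · have hu : G.uVec S (C v) (Sum.inr (⟨ex, hex⟩, false)) = 1 := by
                  simp [MGraph.uVec, hcr, hs_in]
                rw [hu, mul_one, hhv, hCv]
                simp
              · have hu : G.uVec S (C v) (Sum.inr (⟨ex, hex⟩, true)) = -1 := by
                  simp [MGraph.uVec, hcr, ht_out]
                rw [hu, hhv, hCv]
                simp
            · have hCv : C v = C (G.tgt ex) := hCeq ((hCmem v _).mp hv2)
              have ht_in : G.tgt ex ∈ C v := by rw [hCv]; exact hCself _
              have hs_out : G.src ex ∉ C v := by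
                rw [hCv]
                intro hmem2
                exact hsame (hsymm ((hCmem _ _).mp hmem2))
              have hcr : G.crossing (C v) ex := by
                intro heq2; rw [heq2] at hs_out; exact hs_out ht_in
              have hhv : h v = h (G.tgt ex) := (hhconst ((hCmem v _).mp hv2)).symm
              rw [if_neg hv1, if_pos hv2, zero_add]
              cases bb
              · have hu : G.uVec S (C v) (Sum.inr (⟨ex, hex⟩, false)) = -1 := by
                  simp [MGraph.uVec, hcr, hs_out]
                rw [hu, hhv, hCv]
                simp
              · have hu : G.uVec S (C v) (Sum.inr (⟨ex, hex⟩, true)) = 1 := by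
                  simp [MGraph.uVec, hcr, ht_in]
                rw [hu, mul_one, hhv, hCv]
                simp
            · have hs_out : G.src ex ∉ C v := by
                intro hmem2
                exact hv1 ((hCmem _ _).mpr (hsymm ((hCmem _ _).mp hmem2)))
              have ht_out : G.tgt ex ∉ C v := by
                intro hmem2
                exact hv2 ((hCmem _ _).mpr (hsymm ((hCmem _ _).mp hmem2)))
              have hncr : ¬ G.crossing (C v) ex := by
                intro hcr
                exact hcr (propext ⟨fun hx => absurd hx hs_out, fun hx => absurd hx ht_out⟩)
              rw [if_neg hv1, if_neg hv2, add_zero]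
              simp [MGraph.uVec, hncr]
          have hc1 : ((C (G.src ex)).card : ℝ) ≠ 0 := by
            have := Finset.card_pos.mpr ⟨G.src ex, hCself (G.src ex)⟩
            exact_mod_cast this.ne'
          have hc2 : ((C (G.tgt ex)).card : ℝ) ≠ 0 := by
            have := Finset.card_pos.mpr ⟨G.tgt ex, hCself (G.tgt ex)⟩
            exact_mod_cast this.ne'
          rw [Finset.sum_congr rfl (fun v _ => hpt v), Finset.sum_add_distrib,
            Finset.sum_ite_mem, Finset.sum_ite_mem, Finset.univ_inter, Finset.univ_inter,
            Finset.sum_const, Finset.sum_const, nsmul_eq_mul, nsmul_eq_mul]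
          cases bb
          · simp only [if_false, Bool.false_eq_true]
            field_simp
            ring
          · simp only [if_true]
            field_simp
            ring
      -- conclude
      have hEq : G.deltaMap S (G.avgMap S y) - y
          = ∑ v : G.V, (h v / ((C v).card : ℝ)) • G.uVec S (C v) := by
        funext ε
        rw [Pi.sub_apply, Finset.sum_apply]
        simp only [Pi.smul_apply, smul_eq_mul]
        obtain (⟨e, he⟩ | ⟨⟨ex, hex⟩, bb⟩) := ε
        · rw [show G.deltaMap S (G.avgMap S y) (Sum.inl ⟨e, he⟩) = G.avgMap S y e from rfl,
            MGraph.avgMap_apply, dif_neg he]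
          simp [MGraph.uVec]
        · rw [show G.deltaMap S (G.avgMap S y) (Sum.inr (⟨ex, hex⟩, bb)) = G.avgMap S y ex
              from rfl, MGraph.avgMap_apply, dif_pos hex, hsumval ex hex bb]
          cases bb
          · rw [hyf ⟨ex, hex⟩, hyt ⟨ex, hex⟩]
            simp only [if_false, Bool.false_eq_true, hh]
            ring
          · rw [hyf ⟨ex, hex⟩, hyt ⟨ex, hex⟩]
            simp only [if_true, hh]
            ring
      rw [hEq]
      exact hPmem
end
end
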